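/- arXiv:1405.4472 — 4 statements merged into one kernel-verified Lean document; each statement's English description precedes it below -/
import Mathlib

section
/- Average noise sensitivity of compressive maps: let X be uniform on {0,1}^t, ε > 0, and f a randomized mapping from {0,1}^t to {0,1}^{εt}. Then the expectation over uniform j ∈ [t] of d(f(X|_{j←0}), f(X|_{j←1})) is at most √(2 ln 2 · ε). -/
open Finset

/-- Statistical distance: half the ℓ1-distance of probability mass functions. -/
noncomputable def statDist {Ω : Type*} [Fintype Ω] (p q : Ω → ℝ) : ℝ :=
  (1 / 2) * ∑ ω, |p ω - q ω|

/-- The distribution of `f(X|_{j←b})`, where `X` is uniform on `{0,1}^t`, the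
`j`-th coordinate is fixed to `b`, and `f` is a randomized mapping with uniform
seed in `R`. -/
noncomputable def fixDist {W R : Type*} [Fintype W] [Fintype R] [DecidableEq W] {t : ℕ}
    (f : (Fin t → Bool) → R → W) (j : Fin t) (b : Bool) (z : W) : ℝ :=
  ∑ a : Fin t → Bool, ∑ r,
    ((1 : ℝ) / 2) ^ t * (1 / (Fintype.card R : ℝ)) *
      (if f (Function.update a j b) r = z then 1 else 0)


/-! ### Auxiliary development -/

noncomputable def klD {W : Type*} [Fintype W] (p q : W → ℝ) : ℝ :=
  ∑ z, p z * Real.log (p z / q z)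


lemma one_sub_inv_le_log {x : ℝ} (hx : 0 < x) : 1 - x⁻¹ ≤ Real.log x := by
  have h := Real.log_le_sub_one_of_pos (x := x⁻¹) (by positivity)
  rw [Real.log_inv] at h
  linarith

/-- Log-sum inequality. -/
lemma log_sum_ineq {ι : Type*} (s : Finset ι) (a b : ι → ℝ)
    (ha : ∀ i ∈ s, 0 ≤ a i) (hb : ∀ i ∈ s, 0 ≤ b i)
    (hab : ∀ i ∈ s, b i = 0 → a i = 0) :
    (∑ i ∈ s, a i) * Real.log ((∑ i ∈ s, a i) / (∑ i ∈ s, b i))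
      ≤ ∑ i ∈ s, a i * Real.log (a i / b i) := by
  set A := ∑ i ∈ s, a i with hA
  set B := ∑ i ∈ s, b i with hB
  rcases eq_or_lt_of_le (Finset.sum_nonneg ha) with h0 | hApos
  · -- A = 0, so all a i = 0
    have : ∀ i ∈ s, a i = 0 := by
      intro i hi
      exact (Finset.sum_eq_zero_iff_of_nonneg ha).1 h0.symm i hi
    rw [hA, ← h0]
    simp only [zero_mul]
    apply Finset.sum_nonneg
    intro i hi; rw [this i hi]; simp
  · have hBpos : 0 < B := by
      rcases eq_or_lt_of_le (Finset.sum_nonneg hb) with h0 | h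
      · exfalso
        have hball : ∀ i ∈ s, b i = 0 :=
          (Finset.sum_eq_zero_iff_of_nonneg hb).1 h0.symm
        have : A = 0 := Finset.sum_eq_zero fun i hi => hab i hi (hball i hi)
        linarith
      · exact h
    -- per-term: a i * log (a i / b i) ≥ a i * log (A/B) + a i - b i * (A/B)
    have key : ∀ i ∈ s, a i * Real.log (A / B) + (a i - b i * (A / B))
        ≤ a i * Real.log (a i / b i) := by
      intro i hi
      rcases eq_or_lt_of_le (ha i hi) with h0 | hai
      · have hbnn : 0 ≤ b i * (A / B) := mul_nonneg (hb i hi) (by positivity)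
        rw [← h0]
        simp only [zero_mul, zero_add, zero_sub, zero_add]
        linarith
      · have hbi : 0 < b i := by
          rcases eq_or_lt_of_le (hb i hi) with h0 | h
          · exact absurd (hab i hi h0.symm) (by linarith)
          · exact h
        have hlog : 1 - (b i * A) / (a i * B) ≤ Real.log ((a i * B) / (b i * A)) := by
          have := one_sub_inv_le_log (x := (a i * B) / (b i * A)) (by positivity)
          rwa [inv_div] at this
        have heq : Real.log ((a i * B) / (b i * A))
            = Real.log (a i / b i) - Real.log (A / B) := by
          rw [Real.log_div (by positivity) (by positivity),
            Real.log_mul (by positivity) (by positivity),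
            Real.log_mul (by positivity) (by positivity),
            Real.log_div (by positivity) (by positivity),
            Real.log_div (by positivity) (by positivity)]
          ring
        rw [heq] at hlog
        have h2 : a i * (1 - (b i * A) / (a i * B))
            ≤ a i * (Real.log (a i / b i) - Real.log (A / B)) :=
          mul_le_mul_of_nonneg_left hlog (le_of_lt hai)
        have h3 : a i * (1 - (b i * A) / (a i * B)) = a i - b i * (A / B) := by
          field_simp
        rw [h3] at h2
        linarith
    calc A * Real.log (A / B)
        = ∑ i ∈ s, (a i * Real.log (A / B) + (a i - b i * (A / B))) := by
          rw [Finset.sum_add_distrib, Finset.sum_sub_distrib, ← Finset.sum_mul,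
            ← Finset.sum_mul, ← hA, ← hB]
          field_simp
          ring
      _ ≤ ∑ i ∈ s, a i * Real.log (a i / b i) := Finset.sum_le_sum key


noncomputable def hAux (x : ℝ) : ℝ := (x + 1) * Real.log x - 2 * (x - 1)

noncomputable def gAux (x : ℝ) : ℝ :=
  (x + 2) * (x * Real.log x - x + 1) - 3 / 2 * (x - 1) ^ 2

lemma hAux_hasDeriv {x : ℝ} (hx : 0 < x) :
    HasDerivAt hAux (Real.log x + x⁻¹ - 1) x := by
  have h1 : HasDerivAt (fun y : ℝ => (y + 1) * Real.log y)
      (1 * Real.log x + (x + 1) * x⁻¹) x :=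
    (((hasDerivAt_id x).add_const 1)).mul (Real.hasDerivAt_log (ne_of_gt hx))
  have h2 : HasDerivAt (fun y : ℝ => 2 * (y - 1)) 2 x := by
    simpa using ((hasDerivAt_id x).sub_const 1).const_mul 2
  have := h1.sub h2
  exact this.congr_deriv (by rw [add_mul, mul_inv_cancel₀ (ne_of_gt hx)]; ring)
lemma gAux_hasDeriv {x : ℝ} (hx : 0 < x) :
    HasDerivAt gAux (2 * hAux x) x := by
  have hl : HasDerivAt (fun y : ℝ => y * Real.log y) (Real.log x + 1) x := by
    have := (hasDerivAt_id x).mul (Real.hasDerivAt_log (ne_of_gt hx))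
    exact this.congr_deriv (by rw [id, mul_inv_cancel₀ (ne_of_gt hx)]; ring)
  have h1 : HasDerivAt (fun y : ℝ => (y + 2) * (y * Real.log y - y + 1))
      (1 * (x * Real.log x - x + 1) + (x + 2) * (Real.log x + 1 - 1)) x :=
    ((hasDerivAt_id x).add_const 2).mul ((hl.sub (hasDerivAt_id x)).add_const 1)
  have h2 : HasDerivAt (fun y : ℝ => 3 / 2 * (y - 1) ^ 2)
      (3 / 2 * (2 * (x - 1))) x := by
    have := (((hasDerivAt_id x).sub_const 1).pow 2).const_mul (3 / 2 : ℝ)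
    exact this.congr_deriv (by norm_num [id] <;> ring)
  have := h1.sub h2
  exact this.congr_deriv (by unfold hAux; ring)

lemma hAux_mono : MonotoneOn hAux (Set.Ioi 0) := by
  have hderiv : ∀ x ∈ interior (Set.Ioi (0:ℝ)), 0 ≤ deriv hAux x := by
    intro x hx
    rw [interior_Ioi] at hx
    rw [(hAux_hasDeriv hx).deriv]
    have := one_sub_inv_le_log hx
    linarith
  exact monotoneOn_of_deriv_nonneg (convex_Ioi 0)
    (fun x hx => ((hAux_hasDeriv hx).continuousAt.continuousWithinAt))
    (fun x hx => ((hAux_hasDeriv (by rw [interior_Ioi] at hx; exact hx)).differentiableAt).differentiableWithinAt)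
    hderiv

lemma hAux_one : hAux 1 = 0 := by simp [hAux]

lemma gAux_one : gAux 1 = 0 := by simp [gAux]

lemma gAux_nonneg {x : ℝ} (hx : 0 < x) : 0 ≤ gAux x := by
  rcases le_or_gt 1 x with h1 | h1
  · -- on [1, ∞), g is monotone since deriv = 2 h ≥ 0
    have hmono : MonotoneOn gAux (Set.Ici 1) := by
      apply monotoneOn_of_deriv_nonneg (convex_Ici 1)
      · intro y hy
        exact (gAux_hasDeriv (lt_of_lt_of_le one_pos hy)).continuousAt.continuousWithinAt
      · intro y hy
        rw [interior_Ici] at hy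
        exact (gAux_hasDeriv (lt_trans one_pos hy)).differentiableAt.differentiableWithinAt
      · intro y hy
        rw [interior_Ici] at hy
        rw [(gAux_hasDeriv (lt_trans one_pos hy)).deriv]
        have : hAux 1 ≤ hAux y :=
          hAux_mono (Set.mem_Ioi.2 one_pos) (Set.mem_Ioi.2 (lt_trans one_pos hy)) hy.le
        rw [hAux_one] at this
        linarith
    have := hmono (Set.mem_Ici.2 le_rfl) (Set.mem_Ici.2 h1) h1
    rwa [gAux_one] at this
  · -- on (0, 1], g is antitone
    have hanti : AntitoneOn gAux (Set.Ioc 0 1) := by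
      apply antitoneOn_of_deriv_nonpos (convex_Ioc 0 1)
      · intro y hy
        exact (gAux_hasDeriv hy.1).continuousAt.continuousWithinAt
      · intro y hy
        rw [interior_Ioc] at hy
        exact (gAux_hasDeriv hy.1).differentiableAt.differentiableWithinAt
      · intro y hy
        rw [interior_Ioc] at hy
        rw [(gAux_hasDeriv hy.1).deriv]
        have : hAux y ≤ hAux 1 :=
          hAux_mono (Set.mem_Ioi.2 hy.1) (Set.mem_Ioi.2 one_pos) hy.2.le
        rw [hAux_one] at this
        linarith
    have := hanti (Set.mem_Ioc.2 ⟨hx, h1.le⟩) (Set.mem_Ioc.2 ⟨one_pos, le_rfl⟩) h1.le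
    rwa [gAux_one] at this

/-- Scalar Pinsker-type inequality. -/
lemma pinsker_scalar {p q : ℝ} (hp : 0 ≤ p) (hq : 0 ≤ q) (h : q = 0 → p = 0) :
    (p - q) ^ 2 ≤ 2 / 3 * (p + 2 * q) * (p * Real.log (p / q) - p + q) := by
  rcases eq_or_lt_of_le hq with hq0 | hqpos
  · rw [← hq0, h hq0.symm]; norm_num
  rcases eq_or_lt_of_le hp with hp0 | hppos
  · rw [← hp0]
    simp only [zero_sub, zero_mul, zero_add, zero_div]
    nlinarith [sq_nonneg q]
  · have hg := gAux_nonneg (x := p / q) (by positivity)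
    unfold gAux at hg
    have hlog : Real.log (p / q) = Real.log p - Real.log q :=
      Real.log_div (ne_of_gt hppos) (ne_of_gt hqpos)
    set L := Real.log (p / q) with hL
    have key : 0 ≤ (p / q + 2) * (p / q * L - p / q + 1)
        - 3 / 2 * (p / q - 1) ^ 2 := hg
    have hq2 : (0:ℝ) < q ^ 2 := by positivity
    have e1 : q ^ 2 * ((p / q + 2) * (p / q * L - p / q + 1) - 3 / 2 * (p / q - 1) ^ 2)
        = (p + 2 * q) * (p * L - p + q) - 3 / 2 * (p - q) ^ 2 := by
      field_simp
    have h2 : 0 ≤ (p + 2 * q) * (p * L - p + q) - 3 / 2 * (p - q) ^ 2 := by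
      rw [← e1]
      exact mul_nonneg hq2.le key
    linarith


lemma pinsker_finite {W : Type*} [Fintype W] (p q : W → ℝ)
    (hp : ∀ z, 0 ≤ p z) (hq : ∀ z, 0 ≤ q z)
    (hps : ∑ z, p z = 1) (hqs : ∑ z, q z = 1)
    (hsupp : ∀ z, q z = 0 → p z = 0) :
    statDist p q ≤ Real.sqrt (klD p q / 2) := by
  set F : W → ℝ := fun z => Real.sqrt (p z + 2 * q z) with hF
  set G : W → ℝ := fun z => |p z - q z| / Real.sqrt (p z + 2 * q z) with hG
  have hFG : ∀ z, F z * G z = |p z - q z| := by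
    intro z
    rcases eq_or_lt_of_le (add_nonneg (hp z) (by linarith [hq z] : (0:ℝ) ≤ 2 * q z)) with h0 | hpos
    · have hqz : q z = 0 := by nlinarith [hp z, hq z]
      have hpz : p z = 0 := hsupp z hqz
      simp [hF, hG, hpz, hqz]
    · have hs : Real.sqrt (p z + 2 * q z) ≠ 0 := by
        positivity
      simp only [hF, hG]
      field_simp
  have hF2 : ∑ z, F z ^ 2 = 3 := by
    have : ∀ z, F z ^ 2 = p z + 2 * q z := by
      intro z
      exact Real.sq_sqrt (add_nonneg (hp z) (by linarith [hq z]))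
    simp only [this]
    rw [Finset.sum_add_distrib, ← Finset.mul_sum, hps, hqs]
    norm_num
  have hG2 : ∑ z, G z ^ 2 ≤ 2 / 3 * klD p q := by
    have hterm : ∀ z, G z ^ 2 ≤ 2 / 3 * (p z * Real.log (p z / q z) - p z + q z) := by
      intro z
      rcases eq_or_lt_of_le (add_nonneg (hp z) (by linarith [hq z] : (0:ℝ) ≤ 2 * q z)) with h0 | hpos
      · have hqz : q z = 0 := by nlinarith [hp z, hq z]
        have hpz : p z = 0 := hsupp z hqz
        simp [hG, hpz, hqz]
      · have hGz : G z ^ 2 = (p z - q z) ^ 2 / (p z + 2 * q z) := by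
          rw [hG]
          rw [div_pow, sq_abs, Real.sq_sqrt hpos.le]
        rw [hGz, div_le_iff₀ hpos]
        calc (p z - q z) ^ 2 ≤ 2 / 3 * (p z + 2 * q z) * (p z * Real.log (p z / q z) - p z + q z) :=
              pinsker_scalar (hp z) (hq z) (hsupp z)
          _ = 2 / 3 * (p z * Real.log (p z / q z) - p z + q z) * (p z + 2 * q z) := by ring
    calc ∑ z, G z ^ 2 ≤ ∑ z, 2 / 3 * (p z * Real.log (p z / q z) - p z + q z) :=
          Finset.sum_le_sum fun z _ => hterm z
      _ = 2 / 3 * klD p q := by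
          rw [← Finset.mul_sum]
          congr 1
          rw [klD]
          rw [Finset.sum_add_distrib, Finset.sum_sub_distrib, hps, hqs]
          ring
  have hCS := Finset.sum_mul_sq_le_sq_mul_sq Finset.univ F G
  have hS : (∑ z, |p z - q z|) ^ 2 ≤ 2 * klD p q := by
    have h1 : (∑ z, |p z - q z|) ^ 2 = (∑ z, F z * G z) ^ 2 := by
      congr 1
      exact (Finset.sum_congr rfl fun z _ => (hFG z).symm)
    rw [h1]
    calc (∑ z, F z * G z) ^ 2 ≤ (∑ z, F z ^ 2) * ∑ z, G z ^ 2 := hCS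
      _ ≤ 3 * (2 / 3 * klD p q) := by
          rw [hF2]
          have hkl : 0 ≤ 2/3 * klD p q := le_trans (Finset.sum_nonneg fun z _ => sq_nonneg _) hG2
          exact mul_le_mul_of_nonneg_left hG2 (by norm_num)
      _ = 2 * klD p q := by ring
  have hsd : statDist p q ^ 2 ≤ klD p q / 2 := by
    rw [statDist]
    nlinarith [hS]
  have hsdnn : 0 ≤ statDist p q := by
    rw [statDist]
    positivity
  calc statDist p q = Real.sqrt (statDist p q ^ 2) := by
        rw [Real.sqrt_sq hsdnn]
    _ ≤ Real.sqrt (klD p q / 2) := Real.sqrt_le_sqrt hsd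


noncomputable def mixQ {W : Type*} [Fintype W] {t : ℕ}
    (q : (Fin t → Bool) → W → ℝ) (z : W) : ℝ :=
  ∑ a, ((1:ℝ)/2)^t * q a z

noncomputable def fixMix {W : Type*} [Fintype W] {t : ℕ}
    (q : (Fin t → Bool) → W → ℝ) (j : Fin t) (b : Bool) (z : W) : ℝ :=
  ∑ a, ((1:ℝ)/2)^t * q (Function.update a j b) z

section helpers
variable {W : Type*} [Fintype W] {t : ℕ} {q : (Fin t → Bool) → W → ℝ}

lemma mixQ_nonneg (hq : ∀ a z, 0 ≤ q a z) (z : W) : 0 ≤ mixQ q z :=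
  Finset.sum_nonneg fun a _ => mul_nonneg (by positivity) (hq a z)

lemma fixMix_nonneg (hq : ∀ a z, 0 ≤ q a z) (j : Fin t) (b : Bool) (z : W) :
    0 ≤ fixMix q j b z :=
  Finset.sum_nonneg fun a _ => mul_nonneg (by positivity) (hq _ z)

lemma mixQ_eq_zero (hq : ∀ a z, 0 ≤ q a z) {z : W} (h : mixQ q z = 0) (a : Fin t → Bool) :
    q a z = 0 := by
  have := (Finset.sum_eq_zero_iff_of_nonneg
    (fun a _ => mul_nonneg (by positivity : (0:ℝ) ≤ ((1:ℝ)/2)^t) (hq a z))).1 h a (mem_univ a)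
  have h2 : ((1:ℝ)/2)^t ≠ 0 := by positivity
  exact (mul_eq_zero.1 this).resolve_left h2

lemma fixMix_eq_zero (hq : ∀ a z, 0 ≤ q a z) {z : W} (h : mixQ q z = 0)
    (j : Fin t) (b : Bool) : fixMix q j b z = 0 :=
  Finset.sum_eq_zero fun a _ => by rw [mixQ_eq_zero hq h _, mul_zero]

lemma le_mixQ (hq : ∀ a z, 0 ≤ q a z) (a : Fin t → Bool) (z : W) :
    ((1:ℝ)/2)^t * q a z ≤ mixQ q z :=
  Finset.single_le_sum (fun a' _ => mul_nonneg (by positivity) (hq a' z)) (mem_univ a)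

end helpers

lemma klD_self {W : Type*} [Fintype W] (p : W → ℝ) : klD p p = 0 := by
  unfold klD
  apply Finset.sum_eq_zero
  intro z _
  rcases eq_or_ne (p z) 0 with h | h
  · rw [h, zero_mul]
  · rw [div_self h, Real.log_one, mul_zero]

lemma klD_split {W : Type*} [Fintype W] (p r m : W → ℝ)
    (hr : ∀ z, p z ≠ 0 → r z ≠ 0) (hm : ∀ z, p z ≠ 0 → m z ≠ 0) :
    klD p m = klD p r + ∑ z, p z * Real.log (r z / m z) := by
  unfold klD
  rw [← Finset.sum_add_distrib]
  apply Finset.sum_congr rfl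
  intro z _
  rcases eq_or_ne (p z) 0 with h | h
  · rw [h]; ring
  · rw [← mul_add, Real.log_div h (hm z h), Real.log_div h (hr z h),
      Real.log_div (hr z h) (hm z h)]
    ring

/-- Joint convexity of KL divergence, for a two-point (Bool-indexed) mixture. -/
lemma klD_mix_le {W : Type*} [Fintype W] (A B : Bool → W → ℝ)
    (hA : ∀ b z, 0 ≤ A b z) (hB : ∀ b z, 0 ≤ B b z)
    (hsupp : ∀ b z, B b z = 0 → A b z = 0) :
    klD (fun z => ∑ b, (1/2 : ℝ) * A b z) (fun z => ∑ b, (1/2 : ℝ) * B b z)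
      ≤ ∑ b, (1/2 : ℝ) * klD (A b) (B b) := by
  unfold klD
  have hswap : ∑ b, (1/2 : ℝ) * ∑ z, A b z * Real.log (A b z / B b z)
      = ∑ z, ∑ b, ((1/2 : ℝ) * A b z) * Real.log (((1/2 : ℝ) * A b z) / ((1/2 : ℝ) * B b z)) := by
    rw [Finset.sum_comm]
    apply Finset.sum_congr rfl
    intro b _
    rw [Finset.mul_sum]
    apply Finset.sum_congr rfl
    intro z _
    rw [mul_div_mul_left _ _ (by norm_num : (1/2 : ℝ) ≠ 0)]
    ring
  rw [hswap]
  apply Finset.sum_le_sum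
  intro z _
  exact log_sum_ineq Finset.univ (fun b => (1/2 : ℝ) * A b z) (fun b => (1/2 : ℝ) * B b z)
    (fun b _ => mul_nonneg (by norm_num) (hA b z))
    (fun b _ => mul_nonneg (by norm_num) (hB b z))
    (fun b _ hb => by
      have hbz : B b z = 0 := by
        rcases mul_eq_zero.1 hb with h | h
        · norm_num at h
        · exact h
      show (1/2 : ℝ) * A b z = 0
      rw [hsupp b z hbz, mul_zero])

lemma sum_cons_decomp {t : ℕ} {β : Type*} [AddCommMonoid β] (h : (Fin (t+1) → Bool) → β) :
    ∑ a, h a = ∑ b : Bool, ∑ a' : Fin t → Bool, h (Fin.cons b a') := by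
  rw [← (Fin.consEquiv (fun _ : Fin (t+1) => Bool)).sum_comp h, Fintype.sum_prod_type]
  rfl

theorem superadd {W : Type*} [Fintype W] :
    ∀ (t : ℕ) (q : (Fin t → Bool) → W → ℝ), (∀ a z, 0 ≤ q a z) →
    ∑ j : Fin t, ∑ b : Bool, (1/2 : ℝ) * klD (fixMix q j b) (mixQ q)
      ≤ ∑ a, ((1:ℝ)/2)^t * klD (q a) (mixQ q) := by
  intro t
  induction t with
  | zero =>
    intro q hq
    rw [Finset.univ_eq_empty, Finset.sum_empty]
    apply Finset.sum_nonneg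
    intro a _
    have : mixQ q = q a := by
      funext z
      unfold mixQ
      simp only [pow_zero, one_mul]
      rw [Finset.sum_congr rfl (fun x _ => congrFun (congrArg q (Subsingleton.elim x a)) z),
        Finset.sum_const, Finset.card_univ]
      simp
    rw [this, klD_self]
    simp
  | succ t ih =>
    intro q hq
    set q' : Bool → (Fin t → Bool) → W → ℝ := fun b a' => q (Fin.cons b a') with hq'
    have hq'nn : ∀ b, ∀ a z, 0 ≤ q' b a z := fun b a z => hq _ z
    -- (A) mix decomposition
    have hA : mixQ q = fun z => ∑ b, (1/2 : ℝ) * mixQ (q' b) z := by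
      funext z
      unfold mixQ
      rw [sum_cons_decomp (fun a => ((1:ℝ)/2)^(t+1) * q a z)]
      apply Finset.sum_congr rfl
      intro b _
      rw [Finset.mul_sum]
      apply Finset.sum_congr rfl
      intro a' _
      rw [pow_succ]
      ring
    -- (B) fixMix at 0
    have hB : ∀ b : Bool, fixMix q 0 b = mixQ (q' b) := by
      intro b
      funext z
      unfold fixMix mixQ
      rw [sum_cons_decomp (fun a => ((1:ℝ)/2)^(t+1) * q (Function.update a 0 b) z)]
      have he : ∀ c : Bool, ∑ a' : Fin t → Bool, ((1:ℝ)/2)^(t+1) * q (Function.update (Fin.cons c a') 0 b) z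
          = (1/2 : ℝ) * ∑ a' : Fin t → Bool, ((1:ℝ)/2)^t * q' b a' z := by
        intro c
        rw [Finset.mul_sum]
        apply Finset.sum_congr rfl
        intro a' _
        rw [Fin.update_cons_zero, pow_succ, hq']
        ring
      rw [Finset.sum_congr rfl (fun c _ => he c)]
      simp
    -- (C) fixMix at succ
    have hC : ∀ (i : Fin t) (c : Bool), fixMix q i.succ c
        = fun z => ∑ b, (1/2 : ℝ) * fixMix (q' b) i c z := by
      intro i c
      funext z
      unfold fixMix
      rw [sum_cons_decomp (fun a => ((1:ℝ)/2)^(t+1) * q (Function.update a i.succ c) z)]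
      apply Finset.sum_congr rfl
      intro b _
      rw [Finset.mul_sum]
      apply Finset.sum_congr rfl
      intro a' _
      rw [← Fin.cons_update, pow_succ, hq']
      ring
    -- (D) chain rule
    have hD : ∑ a, ((1:ℝ)/2)^(t+1) * klD (q a) (mixQ q)
        = ∑ b, (1/2 : ℝ) * (∑ a', ((1:ℝ)/2)^t * klD (q' b a') (mixQ (q' b)))
          + ∑ b, (1/2 : ℝ) * klD (mixQ (q' b)) (mixQ q) := by
      rw [sum_cons_decomp (fun a => ((1:ℝ)/2)^(t+1) * klD (q a) (mixQ q))]
      rw [← Finset.sum_add_distrib]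
      apply Finset.sum_congr rfl
      intro b _
      have hsplit : ∀ a' : Fin t → Bool, klD (q' b a') (mixQ q) = klD (q' b a') (mixQ (q' b))
          + ∑ z, q' b a' z * Real.log (mixQ (q' b) z / mixQ q z) := by
        intro a'
        apply klD_split
        · intro z hz h0
          exact hz (mixQ_eq_zero (hq'nn b) h0 a')
        · intro z hz h0
          exact hz (mixQ_eq_zero hq h0 (Fin.cons b a'))
      have hcross : ∑ a' : Fin t → Bool, ((1:ℝ)/2)^(t+1)
            * (∑ z, q' b a' z * Real.log (mixQ (q' b) z / mixQ q z))
          = (1/2 : ℝ) * klD (mixQ (q' b)) (mixQ q) := by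
        rw [Finset.sum_congr rfl (fun a' (_ : a' ∈ Finset.univ) => Finset.mul_sum Finset.univ
          (fun z => q' b a' z * Real.log (mixQ (q' b) z / mixQ q z)) (((1:ℝ)/2)^(t+1))),
          Finset.sum_comm]
        unfold klD
        rw [Finset.mul_sum]
        apply Finset.sum_congr rfl
        intro z _
        have hm : mixQ (q' b) z * Real.log (mixQ (q' b) z / mixQ q z)
            = ∑ a' : Fin t → Bool, ((1:ℝ)/2)^t * q' b a' z * Real.log (mixQ (q' b) z / mixQ q z) := by
          rw [← Finset.sum_mul]
          rfl
        rw [hm, Finset.mul_sum]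
        apply Finset.sum_congr rfl
        intro a' _
        rw [pow_succ]
        ring
      calc ∑ a' : Fin t → Bool, ((1:ℝ)/2)^(t+1) * klD (q (Fin.cons b a')) (mixQ q)
          = ∑ a' : Fin t → Bool, ((1:ℝ)/2)^(t+1) * (klD (q' b a') (mixQ (q' b))
              + ∑ z, q' b a' z * Real.log (mixQ (q' b) z / mixQ q z)) := by
            apply Finset.sum_congr rfl
            intro a' _
            rw [← hsplit a']
        _ = ∑ a' : Fin t → Bool, ((1:ℝ)/2)^(t+1) * klD (q' b a') (mixQ (q' b))
              + ∑ a' : Fin t → Bool, ((1:ℝ)/2)^(t+1)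
                * (∑ z, q' b a' z * Real.log (mixQ (q' b) z / mixQ q z)) := by
            rw [← Finset.sum_add_distrib]
            apply Finset.sum_congr rfl
            intro a' _
            ring
        _ = (1/2 : ℝ) * (∑ a', ((1:ℝ)/2)^t * klD (q' b a') (mixQ (q' b)))
              + (1/2 : ℝ) * klD (mixQ (q' b)) (mixQ q) := by
            rw [hcross, Finset.mul_sum]
            congr 1
            apply Finset.sum_congr rfl
            intro a' _
            rw [pow_succ]
            ring
    -- assemble
    rw [hD, Fin.sum_univ_succ]
    have h0term : ∑ c : Bool, (1/2 : ℝ) * klD (fixMix q 0 c) (mixQ q)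
        = ∑ c : Bool, (1/2 : ℝ) * klD (mixQ (q' c)) (mixQ q) := by
      apply Finset.sum_congr rfl
      intro c _
      rw [hB c]
    have hstep : ∀ (i : Fin t) (c : Bool), klD (fixMix q i.succ c) (mixQ q)
        ≤ ∑ b, (1/2 : ℝ) * klD (fixMix (q' b) i c) (mixQ (q' b)) := by
      intro i c
      rw [hC i c, hA]
      exact klD_mix_le _ _ (fun b z => fixMix_nonneg (hq'nn b) i c z)
        (fun b z => mixQ_nonneg (hq'nn b) z)
        (fun b z h0 => fixMix_eq_zero (hq'nn b) h0 i c)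
    have hmid : ∑ i : Fin t, ∑ c : Bool, (1/2 : ℝ) * klD (fixMix q i.succ c) (mixQ q)
        ≤ ∑ b, (1/2 : ℝ) * ∑ i : Fin t, ∑ c : Bool,
            (1/2 : ℝ) * klD (fixMix (q' b) i c) (mixQ (q' b)) := by
      calc ∑ i : Fin t, ∑ c : Bool, (1/2 : ℝ) * klD (fixMix q i.succ c) (mixQ q)
          ≤ ∑ i : Fin t, ∑ c : Bool, (1/2 : ℝ)
              * ∑ b, (1/2 : ℝ) * klD (fixMix (q' b) i c) (mixQ (q' b)) := by
            apply Finset.sum_le_sum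
            intro i _
            apply Finset.sum_le_sum
            intro c _
            exact mul_le_mul_of_nonneg_left (hstep i c) (by norm_num)
        _ = ∑ b, (1/2 : ℝ) * ∑ i : Fin t, ∑ c : Bool,
              (1/2 : ℝ) * klD (fixMix (q' b) i c) (mixQ (q' b)) := by
            simp only [Finset.mul_sum]
            calc ∑ i : Fin t, ∑ c : Bool, ∑ b : Bool,
                  (1/2 : ℝ) * ((1/2 : ℝ) * klD (fixMix (q' b) i c) (mixQ (q' b)))
                = ∑ i : Fin t, ∑ b : Bool, ∑ c : Bool,
                  (1/2 : ℝ) * ((1/2 : ℝ) * klD (fixMix (q' b) i c) (mixQ (q' b))) :=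
                  Finset.sum_congr rfl fun i _ => Finset.sum_comm
              _ = ∑ b : Bool, ∑ i : Fin t, ∑ c : Bool,
                  (1/2 : ℝ) * ((1/2 : ℝ) * klD (fixMix (q' b) i c) (mixQ (q' b))) :=
                  Finset.sum_comm
    have hih : ∀ b : Bool, ∑ i : Fin t, ∑ c : Bool,
        (1/2 : ℝ) * klD (fixMix (q' b) i c) (mixQ (q' b))
        ≤ ∑ a', ((1:ℝ)/2)^t * klD (q' b a') (mixQ (q' b)) := fun b => ih (q' b) (hq'nn b)
    have hfin : ∑ b, (1/2 : ℝ) * ∑ i : Fin t, ∑ c : Bool,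
          (1/2 : ℝ) * klD (fixMix (q' b) i c) (mixQ (q' b))
        ≤ ∑ b, (1/2 : ℝ) * ∑ a', ((1:ℝ)/2)^t * klD (q' b a') (mixQ (q' b)) := by
      apply Finset.sum_le_sum
      intro b _
      exact mul_le_mul_of_nonneg_left (hih b) (by norm_num)
    rw [h0term]
    linarith [le_trans hmid hfin]


section sums
variable {W : Type*} [Fintype W] {t : ℕ} {q : (Fin t → Bool) → W → ℝ}

lemma norm_weight : ∑ _a : Fin t → Bool, ((1:ℝ)/2)^t = 1 := by
  rw [Finset.sum_const, Finset.card_univ]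
  have : Fintype.card (Fin t → Bool) = 2 ^ t := by
    simp [Fintype.card_fun]
  rw [this, nsmul_eq_mul]
  push_cast
  rw [← mul_pow]
  norm_num

lemma sum_mixQ (hqs : ∀ a, ∑ z, q a z = 1) : ∑ z, mixQ q z = 1 := by
  unfold mixQ
  rw [Finset.sum_comm]
  calc ∑ a : Fin t → Bool, ∑ z, ((1:ℝ)/2)^t * q a z
      = ∑ _a : Fin t → Bool, ((1:ℝ)/2)^t := by
        apply Finset.sum_congr rfl
        intro a _
        rw [← Finset.mul_sum, hqs a, mul_one]
    _ = 1 := norm_weight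

lemma sum_fixMix (hqs : ∀ a, ∑ z, q a z = 1) (j : Fin t) (b : Bool) :
    ∑ z, fixMix q j b z = 1 := by
  unfold fixMix
  rw [Finset.sum_comm]
  calc ∑ a : Fin t → Bool, ∑ z, ((1:ℝ)/2)^t * q (Function.update a j b) z
      = ∑ _a : Fin t → Bool, ((1:ℝ)/2)^t := by
        apply Finset.sum_congr rfl
        intro a _
        rw [← Finset.mul_sum, hqs _, mul_one]
    _ = 1 := norm_weight

end sums

/-- The mutual information is at most the log of the output cardinality. -/
lemma info_le_log_card {W : Type*} [Fintype W] [Nonempty W] {t : ℕ}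
    (q : (Fin t → Bool) → W → ℝ)
    (hq : ∀ a z, 0 ≤ q a z) (hqs : ∀ a, ∑ z, q a z = 1) :
    ∑ a, ((1:ℝ)/2)^t * klD (q a) (mixQ q) ≤ Real.log (Fintype.card W) := by
  have hql1 : ∀ a z, q a z ≤ 1 := by
    intro a z
    rw [← hqs a]
    exact Finset.single_le_sum (fun z' _ => hq a z') (mem_univ z)
  -- step 1: klD (q a) (mixQ q) ≤ - ∑ z, q a z * log (mixQ q z)
  have h1 : ∀ a, klD (q a) (mixQ q) ≤ - ∑ z, q a z * Real.log (mixQ q z) := by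
    intro a
    unfold klD
    rw [← Finset.sum_neg_distrib]
    apply Finset.sum_le_sum
    intro z _
    rcases eq_or_ne (q a z) 0 with h0 | h0
    · rw [h0]; simp
    · have hqpos : 0 < q a z := lt_of_le_of_ne (hq a z) (Ne.symm h0)
      have hmpos : 0 < mixQ q z := by
        have := le_mixQ hq a z
        have h2 : (0:ℝ) < ((1:ℝ)/2)^t * q a z := by positivity
        linarith
      rw [Real.log_div h0 (ne_of_gt hmpos)]
      have hlq : Real.log (q a z) ≤ 0 :=
        Real.log_nonpos (hq a z) (hql1 a z)
      nlinarith [hq a z]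
  -- step 2: weighted sum of the RHS is the entropy of mixQ
  have h2 : ∑ a, ((1:ℝ)/2)^t * (- ∑ z, q a z * Real.log (mixQ q z))
      = - ∑ z, mixQ q z * Real.log (mixQ q z) := by
    have e1 : ∀ a : Fin t → Bool, ((1:ℝ)/2)^t * (- ∑ z, q a z * Real.log (mixQ q z))
        = - ∑ z, ((1:ℝ)/2)^t * q a z * Real.log (mixQ q z) := by
      intro a
      rw [mul_neg, Finset.mul_sum]
      congr 1
      exact Finset.sum_congr rfl fun z _ => by ring
    rw [Finset.sum_congr rfl (fun a _ => e1 a)]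
    rw [Finset.sum_neg_distrib]
    congr 1
    rw [Finset.sum_comm]
    apply Finset.sum_congr rfl
    intro z _
    show ∑ a : Fin t → Bool, ((1:ℝ)/2)^t * q a z * Real.log (mixQ q z) = _
    rw [← Finset.sum_mul]
    rfl
  -- step 3: entropy of mixQ is at most log |W|
  have hcardpos : (0:ℝ) < (Fintype.card W : ℝ) := by
    have := Fintype.card_pos (α := W)
    exact_mod_cast this
  have h3 : - ∑ z, mixQ q z * Real.log (mixQ q z) ≤ Real.log (Fintype.card W) := by
    have hls := log_sum_ineq Finset.univ (fun z => mixQ q z)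
      (fun _ => 1 / (Fintype.card W : ℝ))
      (fun z _ => mixQ_nonneg hq z)
      (fun z _ => by positivity)
      (fun z _ h => absurd h (by positivity))
    rw [sum_mixQ hqs] at hls
    have hb1 : ∑ _z : W, 1 / (Fintype.card W : ℝ) = 1 := by
      rw [Finset.sum_const, Finset.card_univ, nsmul_eq_mul]
      field_simp
    rw [hb1] at hls
    simp only [div_one, Real.log_one, one_mul] at hls
    have hrhs : ∑ z, mixQ q z * Real.log (mixQ q z / (1 / (Fintype.card W : ℝ)))
        = ∑ z, mixQ q z * Real.log (mixQ q z) + Real.log (Fintype.card W) := by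
      have e : ∀ z, mixQ q z * Real.log (mixQ q z / (1 / (Fintype.card W : ℝ)))
          = mixQ q z * Real.log (mixQ q z) + mixQ q z * Real.log (Fintype.card W) := by
        intro z
        rcases eq_or_ne (mixQ q z) 0 with h0 | h0
        · rw [h0]; ring
        · rw [Real.log_div h0 (by positivity), Real.log_div one_ne_zero (ne_of_gt hcardpos),
            Real.log_one]
          ring
      rw [Finset.sum_congr rfl (fun z _ => e z), Finset.sum_add_distrib, ← Finset.sum_mul,
        sum_mixQ hqs, one_mul]
    rw [hrhs] at hls
    linarith
  calc ∑ a, ((1:ℝ)/2)^t * klD (q a) (mixQ q)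
      ≤ ∑ a, ((1:ℝ)/2)^t * (- ∑ z, q a z * Real.log (mixQ q z)) := by
        apply Finset.sum_le_sum
        intro a _
        exact mul_le_mul_of_nonneg_left (h1 a) (by positivity)
    _ = - ∑ z, mixQ q z * Real.log (mixQ q z) := h2
    _ ≤ Real.log (Fintype.card W) := h3

/-- Jensen/Cauchy-Schwarz for square roots. -/
lemma sum_sqrt_le {ι : Type*} [Fintype ι] (g : ι → ℝ) (hg : ∀ i, 0 ≤ g i) :
    ∑ i, Real.sqrt (g i) ≤ Real.sqrt ((Fintype.card ι : ℝ) * ∑ i, g i) := by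
  have hCS := Finset.sum_mul_sq_le_sq_mul_sq Finset.univ (fun _ : ι => (1:ℝ))
    (fun i => Real.sqrt (g i))
  simp only [one_mul, one_pow] at hCS
  rw [Finset.sum_const, Finset.card_univ, nsmul_eq_mul, mul_one] at hCS
  have he : ∑ i, Real.sqrt (g i) ^ 2 = ∑ i, g i :=
    Finset.sum_congr rfl fun i _ => Real.sq_sqrt (hg i)
  rw [he] at hCS
  have hnn : 0 ≤ ∑ i, Real.sqrt (g i) :=
    Finset.sum_nonneg fun i _ => Real.sqrt_nonneg _
  calc ∑ i, Real.sqrt (g i) = Real.sqrt ((∑ i, Real.sqrt (g i)) ^ 2) := by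
        rw [Real.sqrt_sq hnn]
    _ ≤ Real.sqrt ((Fintype.card ι : ℝ) * ∑ i, g i) := Real.sqrt_le_sqrt hCS


/-- Average noise sensitivity of compressive maps.  If `f` is a
randomized mapping from `{0,1}^t` to a range with at most `2^{εt}` elements,
then `E_{j∼U([t])} d(f(X|_{j←0}), f(X|_{j←1})) ≤ √(2 ln 2 · ε)`. -/
theorem avg_noise_sensitivity {W R : Type*} [Fintype W] [Fintype R] [DecidableEq W]
    [Nonempty R] (t : ℕ) (ht : 0 < t) (ε : ℝ) (hε : 0 < ε)
    (f : (Fin t → Bool) → R → W)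
    (hW : (Fintype.card W : ℝ) ≤ 2 ^ (ε * t)) :
    (1 / t : ℝ) * ∑ j : Fin t, statDist (fixDist f j false) (fixDist f j true)
      ≤ Real.sqrt (2 * Real.log 2 * ε) := by
  classical
  have hWne : Nonempty W := ⟨f (fun _ => false) (Classical.arbitrary R)⟩
  set q : (Fin t → Bool) → W → ℝ :=
    fun a z => ∑ r, (1 / (Fintype.card R : ℝ)) * (if f a r = z then 1 else 0) with hqdef
  have hq : ∀ a z, 0 ≤ q a z := by
    intro a z
    apply Finset.sum_nonneg
    intro r _
    positivity
  have hqs : ∀ a, ∑ z, q a z = 1 := by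
    intro a
    rw [hqdef]
    simp only
    rw [Finset.sum_comm]
    have hR : (0:ℝ) < (Fintype.card R : ℝ) := by
      have := Fintype.card_pos (α := R)
      exact_mod_cast this
    have e : ∀ r : R, ∑ z, (1 / (Fintype.card R : ℝ)) * (if f a r = z then 1 else 0)
        = 1 / (Fintype.card R : ℝ) := by
      intro r
      rw [← Finset.mul_sum]
      rw [Finset.sum_ite_eq (Finset.univ) (f a r) (fun _ => (1:ℝ))]
      simp
    rw [Finset.sum_congr rfl (fun r _ => e r), Finset.sum_const, Finset.card_univ,
      nsmul_eq_mul]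
    field_simp
  have hfd : ∀ (j : Fin t) (b : Bool), fixDist f j b = fixMix q j b := by
    intro j b
    funext z
    unfold fixDist fixMix
    apply Finset.sum_congr rfl
    intro a _
    rw [hqdef]
    simp only
    rw [Finset.mul_sum]
    apply Finset.sum_congr rfl
    intro r _
    ring
  set P : W → ℝ := fun z => mixQ q z with hP
  -- Pinsker per (j,b)
  have hpins : ∀ (j : Fin t) (b : Bool),
      statDist (fixDist f j b) P ≤ Real.sqrt (klD (fixMix q j b) P / 2) := by
    intro j b
    rw [hfd j b]
    exact pinsker_finite _ _ (fun z => fixMix_nonneg hq j b z) (fun z => mixQ_nonneg hq z)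
      (sum_fixMix hqs j b) (sum_mixQ hqs) (fun z h0 => fixMix_eq_zero hq h0 j b)
  -- triangle inequality
  have htri : ∀ j : Fin t, statDist (fixDist f j false) (fixDist f j true)
      ≤ statDist (fixDist f j false) P + statDist (fixDist f j true) P := by
    intro j
    unfold statDist
    rw [← mul_add, ← Finset.sum_add_distrib]
    apply mul_le_mul_of_nonneg_left _ (by norm_num)
    apply Finset.sum_le_sum
    intro z _
    calc |fixDist f j false z - fixDist f j true z|
        ≤ |fixDist f j false z - P z| + |P z - fixDist f j true z| := abs_sub_le _ _ _
      _ = |fixDist f j false z - P z| + |fixDist f j true z - P z| := by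
          rw [abs_sub_comm (P z)]
  -- the KL sum bound
  have hKL : ∑ j : Fin t, ∑ b : Bool, klD (fixMix q j b) P ≤ 2 * (ε * t * Real.log 2) := by
    have hsup := superadd t q hq
    have hinfo := info_le_log_card q hq hqs
    have hlogW : Real.log (Fintype.card W) ≤ ε * t * Real.log 2 := by
      have hcpos : (0:ℝ) < (Fintype.card W : ℝ) := by
        have := Fintype.card_pos (α := W)
        exact_mod_cast this
      calc Real.log (Fintype.card W) ≤ Real.log (2 ^ (ε * t)) :=
            Real.log_le_log hcpos hW
        _ = ε * t * Real.log 2 := Real.log_rpow (by norm_num) _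
    have h12 : ∑ j : Fin t, ∑ b : Bool, (1/2 : ℝ) * klD (fixMix q j b) P
        = (1/2 : ℝ) * ∑ j : Fin t, ∑ b : Bool, klD (fixMix q j b) P := by
      rw [Finset.mul_sum]
      apply Finset.sum_congr rfl
      intro j _
      rw [Finset.mul_sum]
    have : (1/2 : ℝ) * ∑ j : Fin t, ∑ b : Bool, klD (fixMix q j b) P
        ≤ ε * t * Real.log 2 := by
      rw [← h12]
      exact le_trans hsup (le_trans hinfo hlogW)
    linarith
  -- klD nonneg
  have hklnn : ∀ (j : Fin t) (b : Bool), 0 ≤ klD (fixMix q j b) P := by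
    intro j b
    have := log_sum_ineq Finset.univ (fun z => fixMix q j b z) (fun z => P z)
      (fun z _ => fixMix_nonneg hq j b z) (fun z _ => mixQ_nonneg hq z)
      (fun z _ h0 => fixMix_eq_zero hq h0 j b)
    rw [sum_fixMix hqs j b, sum_mixQ hqs] at this
    simp only [div_one, Real.log_one, one_mul] at this
    exact le_trans (le_of_eq rfl) this
  -- put it together
  have htpos : (0:ℝ) < (t:ℝ) := by exact_mod_cast ht
  have main : ∑ j : Fin t, statDist (fixDist f j false) (fixDist f j true)
      ≤ Real.sqrt ((2 * t : ℝ) * ∑ j : Fin t, ∑ b : Bool, (klD (fixMix q j b) P / 2)) := by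
    calc ∑ j : Fin t, statDist (fixDist f j false) (fixDist f j true)
        ≤ ∑ j : Fin t, (statDist (fixDist f j false) P + statDist (fixDist f j true) P) :=
          Finset.sum_le_sum fun j _ => htri j
      _ = ∑ j : Fin t, ∑ b : Bool, statDist (fixDist f j b) P := by
          apply Finset.sum_congr rfl
          intro j _
          rw [Fintype.sum_bool]
          ring
      _ ≤ ∑ j : Fin t, ∑ b : Bool, Real.sqrt (klD (fixMix q j b) P / 2) :=
          Finset.sum_le_sum fun j _ => Finset.sum_le_sum fun b _ => hpins j b
      _ = ∑ p : Fin t × Bool, Real.sqrt (klD (fixMix q p.1 p.2) P / 2) := by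
          rw [Fintype.sum_prod_type]
      _ ≤ Real.sqrt ((Fintype.card (Fin t × Bool) : ℝ)
            * ∑ p : Fin t × Bool, (klD (fixMix q p.1 p.2) P / 2)) :=
          sum_sqrt_le _ (fun p => by
            have := hklnn p.1 p.2
            linarith)
      _ = Real.sqrt ((2 * t : ℝ) * ∑ j : Fin t, ∑ b : Bool, (klD (fixMix q j b) P / 2)) := by
          rw [Fintype.sum_prod_type]
          congr 2
          · simp [Fintype.card_prod]
            ring
  have hsum2 : ∑ j : Fin t, ∑ b : Bool, (klD (fixMix q j b) P / 2)
      = (∑ j : Fin t, ∑ b : Bool, klD (fixMix q j b) P) / 2 := by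
    rw [Finset.sum_div]
    apply Finset.sum_congr rfl
    intro j _
    rw [Finset.sum_div]
  have hfinal : Real.sqrt ((2 * t : ℝ) * ∑ j : Fin t, ∑ b : Bool, (klD (fixMix q j b) P / 2))
      ≤ Real.sqrt ((t:ℝ)^2 * (2 * Real.log 2 * ε)) := by
    apply Real.sqrt_le_sqrt
    rw [hsum2]
    have hS : (∑ j : Fin t, ∑ b : Bool, klD (fixMix q j b) P) ≤ 2 * (ε * t * Real.log 2) := hKL
    have hSnn : 0 ≤ ∑ j : Fin t, ∑ b : Bool, klD (fixMix q j b) P :=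
      Finset.sum_nonneg fun j _ => Finset.sum_nonneg fun b _ => hklnn j b
    nlinarith [Real.log_pos (by norm_num : (1:ℝ) < 2), htpos]
  have hsq : Real.sqrt ((t:ℝ)^2 * (2 * Real.log 2 * ε)) = t * Real.sqrt (2 * Real.log 2 * ε) := by
    rw [Real.sqrt_mul (by positivity), Real.sqrt_sq htpos.le]
  rw [div_mul_eq_mul_div, one_mul, div_le_iff₀ htpos]
  calc ∑ j : Fin t, statDist (fixDist f j false) (fixDist f j true)
      ≤ Real.sqrt ((2 * t : ℝ) * ∑ j : Fin t, ∑ b : Bool, (klD (fixMix q j b) P / 2)) := main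
    _ ≤ Real.sqrt ((t:ℝ)^2 * (2 * Real.log 2 * ε)) := hfinal
    _ = Real.sqrt (2 * Real.log 2 * ε) * t := by rw [hsq]; ring
end

section
/- Vajda-type inequality: for probability distributions P and Q on a finite set, d(P,Q) ≤ 1 − exp(−1 − D_KL(P || Q)), where D_KL is in bits. -/
/-- Kullback–Leibler divergence in bits: `∑_ω P(ω) log₂(P(ω)/Q(ω))`. -/
noncomputable def klDiv {Ω : Type*} [Fintype Ω] (p q : Ω → ℝ) : ℝ :=
  ∑ ω, if p ω = 0 then 0 else p ω * Real.logb 2 (p ω / q ω)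

/-- Vajda-type inequality: `d(P,Q) ≤ 1 − exp(−1 − D_KL(P‖Q))`,
with `D_KL` in bits and `exp` the natural exponential.  (When `P` is not
absolutely continuous w.r.t. `Q`, the divergence is `+∞` and the inequality is
vacuous, so we assume absolute continuity.) -/
theorem vajda_inequality {Ω : Type*} [Fintype Ω] (p q : Ω → ℝ)
    (hp : ∀ ω, 0 ≤ p ω) (hq : ∀ ω, 0 ≤ q ω)
    (hp1 : ∑ ω, p ω = 1) (hq1 : ∑ ω, q ω = 1)
    (habs : ∀ ω, q ω = 0 → p ω = 0) :
    statDist p q ≤ 1 - Real.exp (-1 - klDiv p q) := by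
  classical
  set A : Finset Ω := Finset.univ.filter (fun ω => p ω ≠ 0) with hA
  have hmem : ∀ ω : Ω, ω ∈ A ↔ p ω ≠ 0 := fun ω => by simp [hA]
  have hppos : ∀ ω ∈ A, 0 < p ω := fun ω hω =>
    (hp ω).lt_of_ne (Ne.symm ((hmem ω).mp hω))
  have hqpos : ∀ ω ∈ A, 0 < q ω := fun ω hω =>
    (hq ω).lt_of_ne fun h => (hmem ω).mp hω (habs ω h.symm)
  have hm0 : ∀ ω : Ω, 0 ≤ min (p ω) (q ω) := fun ω => le_min (hp ω) (hq ω)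
  have hmposA : ∀ ω ∈ A, 0 < min (p ω) (q ω) := fun ω hω => lt_min (hppos ω hω) (hqpos ω hω)
  set C : ℝ := ∑ ω ∈ A, min (p ω) (q ω) with hC
  set S : ℝ := ∑ ω, min (p ω) (q ω) with hS
  have hCS : C ≤ S := Finset.sum_le_sum_of_subset_of_nonneg (Finset.filter_subset _ _)
    (fun ω _ _ => hm0 ω)
  have hAne : A.Nonempty := by
    obtain ⟨ω, hω⟩ := Finset.exists_ne_zero_of_sum_ne_zero
      (show (∑ ω, p ω) ≠ 0 by rw [hp1]; norm_num)
    exact ⟨ω, (hmem ω).mpr hω.2⟩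
  have hCpos : 0 < C := Finset.sum_pos hmposA hAne
  have hpA : ∑ ω ∈ A, p ω = 1 := by
    rw [← hp1, hA]
    exact Finset.sum_filter_ne_zero _
  have hqA : (∑ ω ∈ A, q ω) ≤ 1 := by
    rw [← hq1]
    exact Finset.sum_le_sum_of_subset_of_nonneg (Finset.filter_subset _ _) (fun ω _ _ => hq ω)
  set L : ℝ := ∑ ω ∈ A, p ω * Real.log (p ω / q ω) with hL
  have hklDiv : klDiv p q = L / Real.log 2 := by
    rw [hL, Finset.sum_div, hA, Finset.sum_filter, klDiv]
    refine Finset.sum_congr rfl fun ω _ => ?_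
    by_cases h : p ω = 0 <;> simp [h, Real.logb, mul_div_assoc]
  have hnegL : ∑ ω ∈ A, p ω * Real.log (q ω / p ω) = -L := by
    rw [hL, ← Finset.sum_neg_distrib]
    refine Finset.sum_congr rfl fun ω hω => ?_
    rw [Real.log_div (hqpos ω hω).ne' (hppos ω hω).ne',
        Real.log_div (hppos ω hω).ne' (hqpos ω hω).ne']
    ring
  -- Gibbs : 0 ≤ L
  have hGibbs : 0 ≤ L := by
    have hstep : ∀ ω ∈ A, p ω * Real.log (q ω / p ω) ≤ q ω - p ω := by
      intro ω hω
      have h1 := Real.log_le_sub_one_of_pos (div_pos (hqpos ω hω) (hppos ω hω))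
      have h2 : p ω * (q ω / p ω - 1) = q ω - p ω := by
        field_simp [(hppos ω hω).ne']
      nlinarith [hppos ω hω, h1]
    have hsum : ∑ ω ∈ A, p ω * Real.log (q ω / p ω) ≤ 0 := by
      calc ∑ ω ∈ A, p ω * Real.log (q ω / p ω) ≤ ∑ ω ∈ A, (q ω - p ω) :=
            Finset.sum_le_sum hstep
        _ = (∑ ω ∈ A, q ω) - 1 := by rw [Finset.sum_sub_distrib, hpA]
        _ ≤ 0 := by linarith
    rw [hnegL] at hsum
    linarith
  -- Key bound : -L ≤ log C + 1
  have hstep : ∀ ω ∈ A, p ω * Real.log (q ω / p ω) ≤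
      p ω * Real.log C + min (p ω) (q ω) / C - p ω + q ω := by
    intro ω hω
    have hP := hppos ω hω
    have hQ := hqpos ω hω
    have hM := hmposA ω hω
    set P := p ω with hPdef
    set Q := q ω with hQdef
    set M := min (p ω) (q ω) with hMdef
    have hsplit : Real.log (Q / P) = Real.log (M / P) + Real.log (Q / M) := by
      rw [← Real.log_mul (by positivity) (by positivity)]
      congr 1
      field_simp
    have h1 : Real.log (M / P) ≤ Real.log C + (M / P) / C - 1 := by
      have hx := Real.log_le_sub_one_of_pos (show 0 < (M / P) / C by positivity)
      have hlog : Real.log ((M / P) / C) = Real.log (M / P) - Real.log C :=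
        Real.log_div (by positivity) (by positivity)
      linarith
    have h2 : Real.log (Q / M) ≤ Q / M - 1 :=
      Real.log_le_sub_one_of_pos (by positivity)
    have h3 : P * (Q / M - 1) ≤ Q := by
      have hPQ : P * Q ≤ (P + Q) * M := by
        rcases min_cases P Q with ⟨hMeq, hle⟩ | ⟨hMeq, hle⟩ <;> rw [hMdef, hMeq] <;> nlinarith
      have hc : Q / M * M = Q := div_mul_cancel₀ Q hM.ne'
      nlinarith [hM, hP, hc, hPQ]
    have e1 : P * Real.log (M / P) ≤ P * (Real.log C + (M / P) / C - 1) :=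
      mul_le_mul_of_nonneg_left h1 hP.le
    have e2 : P * Real.log (Q / M) ≤ P * (Q / M - 1) :=
      mul_le_mul_of_nonneg_left h2 hP.le
    have e3 : P * ((M / P) / C) = M / C := by
      field_simp
    rw [hsplit, mul_add]
    nlinarith [e1, e2, h3, e3]
  have hKey : -L ≤ Real.log C + 1 := by
    rw [← hnegL]
    calc ∑ ω ∈ A, p ω * Real.log (q ω / p ω)
        ≤ ∑ ω ∈ A, (p ω * Real.log C + min (p ω) (q ω) / C - p ω + q ω) :=
          Finset.sum_le_sum hstep
      _ = (∑ ω ∈ A, p ω) * Real.log C + (∑ ω ∈ A, min (p ω) (q ω)) / C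
          - (∑ ω ∈ A, p ω) + (∑ ω ∈ A, q ω) := by
          rw [Finset.sum_add_distrib, Finset.sum_sub_distrib, Finset.sum_add_distrib,
            ← Finset.sum_mul, ← Finset.sum_div]
      _ ≤ Real.log C + 1 := by
          rw [hpA, ← hC, one_mul, div_self hCpos.ne']
          linarith
  -- statDist = 1 - S
  have hsd : statDist p q = 1 - S := by
    rw [statDist]
    have habsmin : ∀ ω : Ω, |p ω - q ω| = p ω + q ω - 2 * min (p ω) (q ω) := by
      intro ω
      rcases le_total (p ω) (q ω) with h | h
      · rw [min_eq_left h, abs_of_nonpos (by linarith)]; ring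
      · rw [min_eq_right h, abs_of_nonneg (by linarith)]; ring
    rw [Finset.sum_congr rfl fun ω _ => habsmin ω, Finset.sum_sub_distrib,
      Finset.sum_add_distrib, hp1, hq1, ← Finset.mul_sum, ← hS]
    ring
  -- L ≤ klDiv
  have hLle : L ≤ klDiv p q := by
    rw [hklDiv, le_div_iff₀ (Real.log_pos one_lt_two)]
    nlinarith [Real.log_two_lt_d9, hGibbs]
  have hexp : Real.exp (-1 - klDiv p q) ≤ S := by
    have h1 : -1 - klDiv p q ≤ Real.log C := by linarith
    calc Real.exp (-1 - klDiv p q) ≤ Real.exp (Real.log C) := Real.exp_le_exp.mpr h1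
      _ = C := Real.exp_log hCpos
      _ ≤ S := hCS
  rw [hsd]
  linarith
end

section
/- Greedy step for hypergraph tournaments: let S: binom(V,t) → V be a hypergraph tournament on a finite set V and let R ⊆ V with |R| ≥ t. Then there exists g ∈ binom(R, t−1) such that g dominates at least a 1/t fraction of the elements of R, i.e., |{v ∈ R : v ∈ g or S(g∪{v}) = v}| ≥ |R|/t. -/
open Finset

/-- Greedy step for hypergraph tournaments.  If `S` selects an
element of every `t`-element subset and `R` has at least `t` elements, then some
`(t−1)`-element subset `g ⊆ R` dominates at least a `1/t` fraction of `R`. -/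
theorem hypergraph_tournament_greedy_step {V : Type*} [DecidableEq V]
    (t : ℕ) (ht : 1 ≤ t)
    (S : Finset V → V) (R : Finset V) (hR : t ≤ R.card)
    (hS : ∀ e : Finset V, e ⊆ R → e.card = t → S e ∈ e) :
    ∃ g ⊆ R, g.card = t - 1 ∧
      (R.card : ℝ) / t ≤ (R.filter fun v => v ∈ g ∨ S (insert v g) = v).card := by
  classical
  set n := R.card with hn
  have ht1 : t - 1 ≤ n := le_trans (Nat.sub_le t 1) hR
  set P := R.powersetCard (t - 1) with hP
  have hPcard : P.card = n.choose (t - 1) := card_powersetCard _ _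
  set f : Finset V → ℕ := fun g => ((R \ g).filter fun v => S (insert v g) = v).card
    with hfdef
  -- Key sum identity: ∑_{g ∈ binom(R,t-1)} f g = #binom(R,t)
  have hsum : ∑ g ∈ P, f g = n.choose t := by
    rw [← card_powersetCard t R]
    rw [card_eq_sum_card_fiberwise (f := fun e => e.erase (S e)) (t := P)
      (fun e he => by
        replace he : e ∈ powersetCard t R := he
        show e.erase (S e) ∈ P
        simp only [hP, mem_powersetCard] at he ⊢
        have hSe : S e ∈ e := hS e he.1 he.2
        exact ⟨(erase_subset _ _).trans he.1, by rw [card_erase_of_mem hSe, he.2]⟩)]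
    apply sum_congr rfl
    intro g hg
    simp only [hP, mem_powersetCard] at hg
    symm
    apply card_bij (i := fun e _ => S e)
    · intro e he
      simp only [mem_filter, mem_powersetCard] at he
      obtain ⟨⟨heR, hecard⟩, herase⟩ := he
      have hSe : S e ∈ e := hS e heR hecard
      have he' : insert (S e) g = e := by rw [← herase, insert_erase hSe]
      simp only [hfdef, mem_filter, mem_sdiff]
      refine ⟨⟨heR hSe, ?_⟩, ?_⟩
      · rw [← herase]; exact notMem_erase _ _
      · rw [he']
    · intro e1 he1 e2 he2 hSeq
      simp only [mem_filter, mem_powersetCard] at he1 he2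
      have h1 : insert (S e1) g = e1 := by
        rw [← he1.2, insert_erase (hS e1 he1.1.1 he1.1.2)]
      have h2 : insert (S e2) g = e2 := by
        rw [← he2.2, insert_erase (hS e2 he2.1.1 he2.1.2)]
      rw [← h1, ← h2, hSeq]
    · intro v hv
      simp only [hfdef, mem_filter, mem_sdiff] at hv
      obtain ⟨⟨hvR, hvg⟩, hSv⟩ := hv
      refine ⟨insert v g, ?_, ?_⟩
      · simp only [mem_filter, mem_powersetCard]
        refine ⟨⟨insert_subset hvR hg.1, ?_⟩, ?_⟩
        · rw [card_insert_of_notMem hvg, hg.2]; omega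
        · rw [hSv, erase_insert hvg]
      · exact hSv
  have hc1pos : 0 < n.choose (t - 1) := Nat.choose_pos ht1
  have hid : n.choose t * t = n.choose (t - 1) * (n - (t - 1)) := by
    have h := Nat.choose_succ_right_eq n (t - 1)
    rwa [Nat.sub_add_cancel ht] at h
  have hPne : P.Nonempty := by
    rw [← card_pos, hPcard]; exact hc1pos
  -- pigeonhole
  have hpigeon : ∃ g ∈ P, (n.choose t : ℝ) / (n.choose (t - 1)) ≤ f g := by
    by_contra hcon
    push_neg at hcon
    have hlt : ∑ g ∈ P, (f g : ℝ) < ∑ _g ∈ P, ((n.choose t : ℝ) / (n.choose (t - 1))) :=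
      sum_lt_sum_of_nonempty hPne hcon
    rw [sum_const, hPcard, nsmul_eq_mul] at hlt
    have hcast : (∑ g ∈ P, (f g : ℝ)) = (n.choose t : ℝ) := by
      rw [← Nat.cast_sum, hsum]
    rw [hcast, mul_div_cancel₀] at hlt
    · exact lt_irrefl _ hlt
    · exact_mod_cast hc1pos.ne'
  obtain ⟨g, hgP, hgf⟩ := hpigeon
  simp only [hP, mem_powersetCard] at hgP
  refine ⟨g, hgP.1, hgP.2, ?_⟩
  -- lower bound on the dominated set
  have hsubset : g ∪ ((R \ g).filter fun v => S (insert v g) = v) ⊆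
      R.filter fun v => v ∈ g ∨ S (insert v g) = v := by
    intro x hx
    simp only [mem_union, mem_filter, mem_sdiff] at hx ⊢
    rcases hx with hx | ⟨⟨hxR, _⟩, hxS⟩
    · exact ⟨hgP.1 hx, Or.inl hx⟩
    · exact ⟨hxR, Or.inr hxS⟩
  have hdisj : Disjoint g ((R \ g).filter fun v => S (insert v g) = v) := by
    apply disjoint_left.2
    intro x hxg hxf
    simp only [mem_filter, mem_sdiff] at hxf
    exact hxf.1.2 hxg
  have hcard_lb : (t - 1) + f g ≤ (R.filter fun v => v ∈ g ∨ S (insert v g) = v).card := by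
    calc (t - 1) + f g
        = (g ∪ ((R \ g).filter fun v => S (insert v g) = v)).card := by
          rw [card_union_of_disjoint hdisj, hgP.2]
      _ ≤ _ := card_le_card hsubset
  -- arithmetic
  have hTpos : (0 : ℝ) < t := by exact_mod_cast ht
  have hbpos : (0 : ℝ) < n.choose (t - 1) := by exact_mod_cast hc1pos
  have hidR : (n.choose t : ℝ) * t = (n.choose (t - 1) : ℝ) * ((n : ℝ) - ((t : ℝ) - 1)) := by
    have h : (n.choose t : ℝ) * t = (n.choose (t - 1) : ℝ) * ((n - (t - 1) : ℕ) : ℝ) := by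
      exact_mod_cast hid
    rwa [Nat.cast_sub ht1, Nat.cast_sub ht, Nat.cast_one] at h
  have hdT : (n.choose t : ℝ) / (n.choose (t - 1)) * t = (n : ℝ) - ((t : ℝ) - 1) := by
    rw [div_mul_eq_mul_div, hidR, mul_div_cancel_left₀ _ hbpos.ne']
  have h1 : (n : ℝ) / t ≤ ((t - 1 : ℕ) : ℝ) + (n.choose t : ℝ) / (n.choose (t - 1)) := by
    rw [div_le_iff₀ hTpos, add_mul, hdT, Nat.cast_sub ht, Nat.cast_one]
    nlinarith [sq_nonneg ((t : ℝ) - 1)]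
  calc (n : ℝ) / t
      ≤ ((t - 1 : ℕ) : ℝ) + (n.choose t : ℝ) / (n.choose (t - 1)) := h1
    _ ≤ ((t - 1 : ℕ) : ℝ) + f g := by linarith
    _ = (((t - 1) + f g : ℕ) : ℝ) := by push_cast; ring
    _ ≤ _ := by exact_mod_cast hcard_lb
end

section
/- For independent uniform X₁,…,X_t on a finite set Σ, X = (X₁,…,X_t), and a randomized mapping f with I(f(X):X) ≤ C·t·log t, the average over uniform j∈[t] and x∈Σ of d(f(X|_{X_j≠x}), f(X|_{X_j=x})) is at most 1 − e^{−1−C log t} + 1/|Σ|. -/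
open Finset

/-- Shannon entropy (in bits) of a probability mass function. -/
noncomputable def entropyOf {α : Type*} [Fintype α] (p : α → ℝ) : ℝ :=
  ∑ a, -(p a * Real.logb 2 (p a))

section

variable {σ W R : Type*} [Fintype σ] [Fintype W] [Fintype R]
  [DecidableEq σ] [DecidableEq W] {t : ℕ}

/-- The distribution of `f(X)` where `X = (X₁,…,X_t)` is a vector of independent
uniform variables on `σ` and `f` is a randomized mapping with uniform seed. -/
noncomputable def outDist (f : (Fin t → σ) → R → W) (z : W) : ℝ :=
  ∑ a : Fin t → σ, ∑ r,
    ((1 : ℝ) / (Fintype.card σ : ℝ)) ^ t * (1 / (Fintype.card R : ℝ)) *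
      (if f a r = z then 1 else 0)

/-- The joint distribution of `(f(X), X)`. -/
noncomputable def jointDist (f : (Fin t → σ) → R → W) (za : W × (Fin t → σ)) : ℝ :=
  ∑ r, ((1 : ℝ) / (Fintype.card σ : ℝ)) ^ t * (1 / (Fintype.card R : ℝ)) *
    (if f za.2 r = za.1 then 1 else 0)

/-- The mutual information `I(f(X) : X)` (in bits). -/
noncomputable def miOut (f : (Fin t → σ) → R → W) : ℝ :=
  entropyOf (outDist f)
    + entropyOf (fun _ : Fin t → σ => ((1 : ℝ) / (Fintype.card σ : ℝ)) ^ t)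
    - entropyOf (jointDist f)

/-- The distribution of `f(X|_{X_j = x})`: the `j`-th coordinate fixed to `x`. -/
noncomputable def eqDist (f : (Fin t → σ) → R → W) (j : Fin t) (x : σ) (z : W) : ℝ :=
  ∑ a : Fin t → σ, ∑ r,
    (if a j = x then ((1 : ℝ) / (Fintype.card σ : ℝ)) ^ (t - 1) else 0) *
      (1 / (Fintype.card R : ℝ)) * (if f a r = z then 1 else 0)

/-- The distribution of `f(X|_{X_j ≠ x})`: the `j`-th coordinate resampled
uniformly from `σ ∖ {x}`. -/
noncomputable def neDist (f : (Fin t → σ) → R → W) (j : Fin t) (x : σ) (z : W) : ℝ :=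
  ∑ a : Fin t → σ, ∑ r,
    (if a j = x then 0
      else (1 / ((Fintype.card σ : ℝ) - 1)) * ((1 : ℝ) / (Fintype.card σ : ℝ)) ^ (t - 1)) *
      (1 / (Fintype.card R : ℝ)) * (if f a r = z then 1 else 0)

end


/-- Weighted Jensen for `exp` via the tangent-line trick. -/
lemma exp_jensen {ι : Type*} (s : Finset ι) (w g : ι → ℝ)
    (hw : ∀ i ∈ s, 0 ≤ w i) (h1 : ∑ i ∈ s, w i = 1) (hg : ∀ i ∈ s, 0 < g i) :
    Real.exp (∑ i ∈ s, w i * Real.log (g i)) ≤ ∑ i ∈ s, w i * g i := by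
  set m := ∑ i ∈ s, w i * Real.log (g i) with hm
  have key : ∀ i ∈ s, w i * (Real.exp m * (1 + (Real.log (g i) - m))) ≤ w i * g i := by
    intro i hi
    have h2 : Real.exp m * (1 + (Real.log (g i) - m)) ≤ g i := by
      have h0 := Real.add_one_le_exp (Real.log (g i) - m)
      have h3 := mul_le_mul_of_nonneg_left h0 (Real.exp_nonneg m)
      calc Real.exp m * (1 + (Real.log (g i) - m))
          ≤ Real.exp m * Real.exp (Real.log (g i) - m) := by linarith
        _ = g i := by
            rw [← Real.exp_add, show m + (Real.log (g i) - m) = Real.log (g i) by ring,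
              Real.exp_log (hg i hi)]
    exact mul_le_mul_of_nonneg_left h2 (hw i hi)
  have heq : ∑ i ∈ s, w i * (Real.exp m * (1 + (Real.log (g i) - m))) = Real.exp m := by
    have h4 : ∀ i ∈ s, w i * (Real.exp m * (1 + (Real.log (g i) - m)))
        = Real.exp m * w i + Real.exp m * (w i * Real.log (g i)) - Real.exp m * m * w i :=
      fun i _ => by ring
    rw [Finset.sum_congr rfl h4, Finset.sum_sub_distrib, Finset.sum_add_distrib,
      ← Finset.mul_sum, ← Finset.mul_sum, ← Finset.mul_sum, h1, ← hm]
    ring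
  calc Real.exp m = ∑ i ∈ s, w i * (Real.exp m * (1 + (Real.log (g i) - m))) := heq.symm
    _ ≤ ∑ i ∈ s, w i * g i := Finset.sum_le_sum key

/-- KL divergence in nats. -/
noncomputable def klN {W : Type*} [Fintype W] (p q : W → ℝ) : ℝ :=
  ∑ z, p z * Real.log (p z / q z)

/-- Vajda-type inequality. -/
lemma statDist_le_one_sub_exp {W : Type*} [Fintype W] (p q : W → ℝ)
    (hp : ∀ z, 0 ≤ p z) (hq : ∀ z, 0 ≤ q z)
    (hps : ∑ z, p z = 1) (hqs : ∑ z, q z = 1)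
    (hsupp : ∀ z, q z = 0 → p z = 0) :
    statDist p q ≤ 1 - Real.exp (-1 - klN p q) := by
  classical
  set s : Finset W := univ.filter (fun z => p z ≠ 0) with hs
  have hmem : ∀ z ∈ s, 0 < p z := by
    intro z hz
    rw [hs, mem_filter] at hz
    exact lt_of_le_of_ne (hp z) (Ne.symm hz.2)
  have hqpos : ∀ z ∈ s, 0 < q z := by
    intro z hz
    rcases (hq z).lt_or_eq with h | h
    · exact h
    · exact absurd (hsupp z h.symm) (by rw [hs, mem_filter] at hz; exact hz.2)
  -- statDist = 1 - sum of mins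
  have habs : ∀ z : W, |p z - q z| = p z + q z - 2 * min (p z) (q z) := by
    intro z
    rcases le_total (p z) (q z) with h | h
    · rw [abs_of_nonpos (by linarith), min_eq_left h]; ring
    · rw [abs_of_nonneg (by linarith), min_eq_right h]; ring
  have hsd : statDist p q = 1 - ∑ z, min (p z) (q z) := by
    rw [statDist, Finset.sum_congr rfl (fun z _ => habs z)]
    rw [Finset.sum_sub_distrib, Finset.sum_add_distrib, hps, hqs, ← Finset.mul_sum]
    ring
  rw [hsd]
  have hmain : Real.exp (-1 - klN p q) ≤ ∑ z, min (p z) (q z) := by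
    have hws : ∑ z ∈ s, p z = 1 := by
      rw [← hps]
      exact Finset.sum_filter_ne_zero univ
    have hgpos : ∀ z ∈ s, 0 < min (p z) (q z) / p z :=
      fun z hz => div_pos (lt_min (hmem z hz) (hqpos z hz)) (hmem z hz)
    have hJ := exp_jensen s p (fun z => min (p z) (q z) / p z)
      (fun z hz => (hmem z hz).le) hws hgpos
    have hsum_eq : ∑ z ∈ s, p z * (min (p z) (q z) / p z) = ∑ z ∈ s, min (p z) (q z) := by
      refine Finset.sum_congr rfl fun z hz => ?_
      rw [mul_div_cancel₀ _ (hmem z hz).ne']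
    have hsub : ∑ z ∈ s, min (p z) (q z) ≤ ∑ z, min (p z) (q z) := by
      refine Finset.sum_le_sum_of_subset_of_nonneg (Finset.subset_univ s) ?_
      intro z _ _
      exact le_min (hp z) (hq z)
    -- lower bound the exponent
    have hexp : -1 - klN p q ≤ ∑ z ∈ s, p z * Real.log (min (p z) (q z) / p z) := by
      have hterm : ∀ z ∈ s, p z * Real.log (q z / p z) - q z
          ≤ p z * Real.log (min (p z) (q z) / p z) := by
        intro z hz
        rcases le_total (q z) (p z) with h | h
        · rw [min_eq_right h]
          nlinarith [hq z]
        · rw [min_eq_left h, div_self (hmem z hz).ne', Real.log_one]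
          have hlog := Real.log_le_sub_one_of_pos (div_pos (hqpos z hz) (hmem z hz))
          have h2 := mul_le_mul_of_nonneg_left hlog (hmem z hz).le
          have h3 : p z * (q z / p z - 1) = q z - p z := by
            rw [mul_sub, mul_div_cancel₀ _ (hmem z hz).ne']; ring
          nlinarith [hmem z hz]
      have hkl : ∑ z ∈ s, p z * Real.log (p z / q z) = klN p q := by
        rw [klN]
        refine Finset.sum_subset (Finset.subset_univ s) ?_
        intro z _ hz
        have : p z = 0 := by
          by_contra hne
          exact hz (by rw [hs, mem_filter]; exact ⟨mem_univ z, hne⟩)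
        rw [this]; ring
      have hrev : ∀ z ∈ s, p z * Real.log (q z / p z) = -(p z * Real.log (p z / q z)) := by
        intro z hz
        rw [Real.log_div (hqpos z hz).ne' (hmem z hz).ne',
          Real.log_div (hmem z hz).ne' (hqpos z hz).ne']
        ring
      have hqle : ∑ z ∈ s, q z ≤ 1 := by
        rw [← hqs]
        exact Finset.sum_le_sum_of_subset_of_nonneg (Finset.subset_univ s) fun z _ _ => hq z
      have h5 : ∑ z ∈ s, (p z * Real.log (q z / p z) - q z)
          ≤ ∑ z ∈ s, p z * Real.log (min (p z) (q z) / p z) := Finset.sum_le_sum hterm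
      rw [Finset.sum_sub_distrib, Finset.sum_congr rfl hrev, Finset.sum_neg_distrib, hkl] at h5
      linarith
    calc Real.exp (-1 - klN p q)
        ≤ Real.exp (∑ z ∈ s, p z * Real.log (min (p z) (q z) / p z)) := Real.exp_le_exp.mpr hexp
      _ ≤ ∑ z ∈ s, p z * (min (p z) (q z) / p z) := hJ
      _ = ∑ z ∈ s, min (p z) (q z) := hsum_eq
      _ ≤ ∑ z, min (p z) (q z) := hsub
  linarith

section Fiber
variable {σ : Type*} [Fintype σ] [DecidableEq σ] {t : ℕ}

lemma fiber_sum (j : Fin t) (c : (Fin t → σ) → ℝ) (ψ : σ → ℝ) :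
    ∑ x : σ, (∑ a ∈ univ.filter (fun a : Fin t → σ => a j = x), c a) * ψ x
      = ∑ a : Fin t → σ, c a * ψ (a j) := by
  rw [← Finset.sum_fiberwise univ (fun a : Fin t → σ => a j) (fun a => c a * ψ (a j))]
  refine Finset.sum_congr rfl fun x _ => ?_
  rw [Finset.sum_mul]
  refine Finset.sum_congr rfl fun a ha => ?_
  rw [mem_filter] at ha
  rw [ha.2]

lemma fiber_total (j : Fin t) (c : (Fin t → σ) → ℝ) :
    ∑ x : σ, (∑ a ∈ univ.filter (fun a : Fin t → σ => a j = x), c a)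
      = ∑ a : Fin t → σ, c a := by
  have := fiber_sum j c (fun _ => 1)
  simpa using this

lemma fiber_card (j : Fin t) (x : σ) :
    (univ.filter (fun a : Fin t → σ => a j = x)).card = Fintype.card σ ^ (t - 1) := by
  have e : {a : Fin t → σ // a j = x} ≃ ({i : Fin t // i ≠ j} → σ) :=
    { toFun := fun a i => a.1 i.1
      invFun := fun b => ⟨fun i => if h : i = j then x else b ⟨i, h⟩, by simp⟩
      left_inv := fun a => Subtype.ext (funext fun i => by
        by_cases h : i = j
        · subst h; simp [a.2]
        · simp [h])
      right_inv := fun b => funext fun i => by simp [i.2] }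
  have h1 : (univ.filter (fun a : Fin t → σ => a j = x)).card
      = Fintype.card {a : Fin t → σ // a j = x} := (Fintype.card_subtype _).symm
  rw [h1, Fintype.card_congr e, Fintype.card_fun]
  congr 1
  have : Fintype.card {i : Fin t // i ≠ j} = Fintype.card (Fin t) - Fintype.card {i : Fin t // i = j} :=
    Fintype.card_subtype_compl _
  rw [this, Fintype.card_subtype_eq, Fintype.card_fin]

end Fiber

/-- The Gibbs/superadditivity core lemma. -/
lemma key_superadd {σ : Type*} [Fintype σ] [DecidableEq σ] {t : ℕ} (ht : 0 < t)
    (hk : 2 ≤ Fintype.card σ) (c : (Fin t → σ) → ℝ) (hc : ∀ a, 0 ≤ c a)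
    (e : Fin t → σ → ℝ)
    (he : ∀ j x, e j x = (Fintype.card σ : ℝ) * ∑ a ∈ univ.filter (fun a : Fin t → σ => a j = x), c a)
    (u : ℝ) (hu : u = ∑ a, c a) :
    ∑ j : Fin t, ∑ x : σ, (1 / (Fintype.card σ : ℝ)) * (e j x * Real.log (e j x / u))
      ≤ ∑ a : Fin t → σ, c a * Real.log (c a / (((1 : ℝ) / (Fintype.card σ : ℝ)) ^ t * u)) := by
  classical
  set k : ℝ := (Fintype.card σ : ℝ) with hkdef
  have hk1 : (1 : ℝ) < k := by
    rw [hkdef]; exact_mod_cast lt_of_lt_of_le one_lt_two (by exact_mod_cast hk)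
  have hk0 : (0 : ℝ) < k := lt_trans one_pos hk1
  have he_nonneg : ∀ j x, 0 ≤ e j x := fun j x => by
    rw [he]; exact mul_nonneg hk0.le (Finset.sum_nonneg fun a _ => hc a)
  rcases eq_or_lt_of_le (by rw [hu]; exact Finset.sum_nonneg fun a _ => hc a : (0:ℝ) ≤ u) with h0 | hu0
  · -- u = 0 : everything vanishes
    have hc0 : ∀ a, c a = 0 := by
      intro a
      have := (Finset.sum_eq_zero_iff_of_nonneg (fun a _ => hc a)).mp (by rw [← hu, ← h0])
      exact this a (mem_univ a)
    have he0 : ∀ j x, e j x = 0 := fun j x => by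
      rw [he]
      simp [Finset.sum_eq_zero fun a _ => hc0 a]
    calc ∑ j : Fin t, ∑ x : σ, (1 / k) * (e j x * Real.log (e j x / u))
        = 0 := by
          refine Finset.sum_eq_zero fun j _ => Finset.sum_eq_zero fun x _ => ?_
          rw [he0]; ring
      _ ≤ _ := Finset.sum_nonneg fun a _ => by rw [hc0]; simp
  · -- u > 0
    set π : ℝ := ((1 : ℝ) / k) ^ t with hπ
    have hπ0 : 0 < π := pow_pos (by positivity) t
    set Q : (Fin t → σ) → ℝ := fun a => ∏ j, e j (a j) / u with hQ
    have hQ0 : ∀ a, 0 ≤ Q a := fun a =>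
      Finset.prod_nonneg fun j _ => div_nonneg (he_nonneg j (a j)) hu0.le
    -- step 1: rewrite LHS
    have step1 : ∀ j : Fin t, ∑ x : σ, (1 / k) * (e j x * Real.log (e j x / u))
        = ∑ a : Fin t → σ, c a * Real.log (e j (a j) / u) := by
      intro j
      rw [← fiber_sum j c (fun x => Real.log (e j x / u))]
      refine Finset.sum_congr rfl fun x _ => ?_
      rw [he]
      field_simp
    have hL : ∑ j : Fin t, ∑ x : σ, (1 / k) * (e j x * Real.log (e j x / u))
        = ∑ a : Fin t → σ, c a * ∑ j, Real.log (e j (a j) / u) := by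
      rw [Finset.sum_congr rfl fun j _ => step1 j, Finset.sum_comm]
      exact Finset.sum_congr rfl fun a _ => by rw [Finset.mul_sum]
    rw [hL]
    -- per-a bound
    have perA : ∀ a : Fin t → σ,
        c a * ∑ j, Real.log (e j (a j) / u)
          ≤ c a * Real.log (c a / (π * u)) + (π * u * Q a - c a) := by
      intro a
      rcases eq_or_lt_of_le (hc a) with h0a | hca
      · rw [← h0a]
        simp only [zero_mul, zero_add, add_zero, sub_zero]
        exact mul_nonneg (by positivity) (hQ0 a)
      · have hea : ∀ j, 0 < e j (a j) := by
          intro j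
          rw [he]
          refine mul_pos hk0 (lt_of_lt_of_le hca ?_)
          exact Finset.single_le_sum (fun a' _ => hc a') (by simp)
        have hQa : 0 < Q a := Finset.prod_pos fun j _ => div_pos (hea j) hu0
        have hlogQ : Real.log (Q a) = ∑ j, Real.log (e j (a j) / u) :=
          Real.log_prod fun j _ => (div_pos (hea j) hu0).ne'
        have hid : c a * ∑ j, Real.log (e j (a j) / u) - c a * Real.log (c a / (π * u))
            = c a * Real.log (Q a * (π * u) / c a) := by
          rw [← hlogQ, Real.log_div (by positivity) hca.ne', Real.log_mul hQa.ne' (by positivity),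
            Real.log_div hca.ne' (by positivity)]
          ring
        have hb : Real.log (Q a * (π * u) / c a) ≤ Q a * (π * u) / c a - 1 :=
          Real.log_le_sub_one_of_pos (by positivity)
        have hb2 := mul_le_mul_of_nonneg_left hb hca.le
        have hend : c a * (Q a * (π * u) / c a - 1) = π * u * Q a - c a := by
          rw [mul_sub, mul_div_cancel₀ _ hca.ne']
          ring
        linarith [hid, hb2, hend]
    have hsumQ : ∑ a : Fin t → σ, Q a = k ^ t := by
      have h1 : ∑ a : Fin t → σ, ∏ j, e j (a j) / u = ∏ j : Fin t, ∑ x : σ, e j x / u :=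
        (Fintype.prod_sum fun j x => e j x / u).symm
      rw [hQ, h1]
      have h2 : ∀ j : Fin t, ∑ x : σ, e j x / u = k := by
        intro j
        rw [← Finset.sum_div, Finset.sum_congr rfl fun x _ => he j x, ← Finset.mul_sum,
          fiber_total, ← hu]
        field_simp
      rw [Finset.prod_congr rfl fun j _ => h2 j, Finset.prod_const, Finset.card_univ,
        Fintype.card_fin]
    have htot : ∑ a : Fin t → σ, (π * u * Q a - c a) = 0 := by
      rw [Finset.sum_sub_distrib, ← Finset.mul_sum, hsumQ, ← hu]
      have h3 : ((1:ℝ)/k)^t * k^t = 1 := by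
        rw [div_pow, one_pow]
        field_simp
      rw [hπ]
      nlinarith [h3]
    calc ∑ a : Fin t → σ, c a * ∑ j, Real.log (e j (a j) / u)
        ≤ ∑ a : Fin t → σ, (c a * Real.log (c a / (π * u)) + (π * u * Q a - c a)) :=
          Finset.sum_le_sum fun a _ => perA a
      _ = (∑ a : Fin t → σ, c a * Real.log (c a / (π * u)))
            + ∑ a : Fin t → σ, (π * u * Q a - c a) := Finset.sum_add_distrib
      _ = ∑ a : Fin t → σ, c a * Real.log (c a / (π * u)) := by rw [htot, add_zero]
      _ = _ := by rw [hπ]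

section
set_option linter.unusedSectionVars false
variable {σ W R : Type*} [Fintype σ] [Fintype W] [Fintype R]
  [DecidableEq σ] [DecidableEq W] {t : ℕ}

/-- The conditional output distribution `P(f(X)=z | X=a)`. -/
noncomputable def cDist (f : (Fin t → σ) → R → W) (a : Fin t → σ) (z : W) : ℝ :=
  (1 / (Fintype.card R : ℝ)) * ∑ r, if f a r = z then 1 else 0

variable [Nonempty R] (f : (Fin t → σ) → R → W)

lemma cDist_nonneg (a : Fin t → σ) (z : W) : 0 ≤ cDist f a z := by
  unfold cDist
  positivity

lemma cDist_sum (a : Fin t → σ) : ∑ z, cDist f a z = 1 := by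
  unfold cDist
  rw [← Finset.mul_sum, Finset.sum_comm]
  have h1 : ∀ r : R, ∑ z : W, (if f a r = z then (1:ℝ) else 0) = 1 := by
    intro r
    simp
  rw [Finset.sum_congr rfl fun r _ => h1 r, Finset.sum_const, Finset.card_univ, nsmul_eq_mul,
    mul_one]
  have : (Fintype.card R : ℝ) ≠ 0 := by
    exact_mod_cast Fintype.card_ne_zero
  field_simp

lemma outDist_eq (z : W) :
    outDist f z = ∑ a : Fin t → σ, ((1 : ℝ) / (Fintype.card σ : ℝ)) ^ t * cDist f a z := by
  unfold outDist cDist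
  refine Finset.sum_congr rfl fun a _ => ?_
  rw [← mul_assoc, Finset.mul_sum]

lemma jointDist_eq (z : W) (a : Fin t → σ) :
    jointDist f (z, a) = ((1 : ℝ) / (Fintype.card σ : ℝ)) ^ t * cDist f a z := by
  unfold jointDist cDist
  rw [← mul_assoc, Finset.mul_sum]

lemma eqDist_eq (j : Fin t) (x : σ) (z : W) :
    eqDist f j x z = ∑ a : Fin t → σ,
      (if a j = x then ((1 : ℝ) / (Fintype.card σ : ℝ)) ^ (t - 1) else 0) * cDist f a z := by
  unfold eqDist cDist
  refine Finset.sum_congr rfl fun a _ => ?_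
  rw [← mul_assoc, Finset.mul_sum]

lemma neDist_eq (j : Fin t) (x : σ) (z : W) :
    neDist f j x z = ∑ a : Fin t → σ,
      (if a j = x then 0
        else (1 / ((Fintype.card σ : ℝ) - 1)) * ((1 : ℝ) / (Fintype.card σ : ℝ)) ^ (t - 1)) *
        cDist f a z := by
  unfold neDist cDist
  refine Finset.sum_congr rfl fun a _ => ?_
  rw [← mul_assoc, Finset.mul_sum]

end


section
set_option linter.unusedSectionVars false
variable {σ W R : Type*} [Fintype σ] [Fintype W] [Fintype R]
  [DecidableEq σ] [DecidableEq W] {t : ℕ} [Nonempty R] (f : (Fin t → σ) → R → W)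

lemma coef_eq (ht : 0 < t) (hσ : 2 ≤ Fintype.card σ) :
    (Fintype.card σ : ℝ) * ((1 : ℝ) / (Fintype.card σ : ℝ)) ^ t
      = ((1 : ℝ) / (Fintype.card σ : ℝ)) ^ (t - 1) := by
  have hk0 : (Fintype.card σ : ℝ) ≠ 0 := by
    have : 0 < Fintype.card σ := lt_of_lt_of_le two_pos hσ
    exact_mod_cast this.ne'
  have h1 : t = (t - 1) + 1 := by omega
  rw [h1, pow_succ]
  field_simp
  ring
  simp

lemma outDist_nonneg (z : W) : 0 ≤ outDist f z := by
  rw [outDist_eq]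
  exact Finset.sum_nonneg fun a _ => mul_nonneg (by positivity) (cDist_nonneg f a z)

lemma eqDist_nonneg (j : Fin t) (x : σ) (z : W) : 0 ≤ eqDist f j x z := by
  rw [eqDist_eq]
  refine Finset.sum_nonneg fun a _ => mul_nonneg ?_ (cDist_nonneg f a z)
  split <;> positivity

lemma neDist_nonneg (hσ : 2 ≤ Fintype.card σ) (j : Fin t) (x : σ) (z : W) :
    0 ≤ neDist f j x z := by
  have hk1 : (1 : ℝ) ≤ (Fintype.card σ : ℝ) := by exact_mod_cast le_trans one_le_two hσ
  rw [neDist_eq]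
  refine Finset.sum_nonneg fun a _ => mul_nonneg ?_ (cDist_nonneg f a z)
  split
  · exact le_refl 0
  · exact mul_nonneg (div_nonneg zero_le_one (by linarith)) (by positivity)

lemma sum_x_eqDist (ht : 0 < t) (hσ : 2 ≤ Fintype.card σ) (j : Fin t) (z : W) :
    ∑ x : σ, eqDist f j x z = (Fintype.card σ : ℝ) * outDist f z := by
  rw [outDist_eq, Finset.mul_sum, Finset.sum_congr rfl fun x _ => eqDist_eq f j x z,
    Finset.sum_comm]
  refine Finset.sum_congr rfl fun a _ => ?_
  rw [← Finset.sum_mul, Finset.sum_ite_eq univ (a j)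
    (fun _ => ((1 : ℝ) / (Fintype.card σ : ℝ)) ^ (t - 1)), if_pos (mem_univ _), ← mul_assoc,
    coef_eq (σ := σ) ht hσ]

lemma outDist_sum (hσ : 2 ≤ Fintype.card σ) : ∑ z, outDist f z = 1 := by
  have hk0 : (Fintype.card σ : ℝ) ≠ 0 := by
    have : 0 < Fintype.card σ := lt_of_lt_of_le two_pos hσ
    exact_mod_cast this.ne'
  rw [Finset.sum_congr rfl fun z _ => outDist_eq f z, Finset.sum_comm]
  rw [Finset.sum_congr rfl fun a (_ : a ∈ univ) => (by rw [← Finset.mul_sum, cDist_sum f a, mul_one] :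
    ∑ z : W, ((1 : ℝ) / (Fintype.card σ : ℝ)) ^ t * cDist f a z
      = ((1 : ℝ) / (Fintype.card σ : ℝ)) ^ t)]
  rw [Finset.sum_const, Finset.card_univ, Fintype.card_fun, Fintype.card_fin, nsmul_eq_mul]
  rw [div_pow, one_pow]
  push_cast
  field_simp

lemma eqDist_sum (hσ : 2 ≤ Fintype.card σ) (j : Fin t) (x : σ) :
    ∑ z, eqDist f j x z = 1 := by
  have hk0 : (Fintype.card σ : ℝ) ≠ 0 := by
    have : 0 < Fintype.card σ := lt_of_lt_of_le two_pos hσ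
    exact_mod_cast this.ne'
  rw [Finset.sum_congr rfl fun z _ => eqDist_eq f j x z, Finset.sum_comm]
  have h1 : ∀ a : Fin t → σ, ∑ z : W,
      (if a j = x then ((1 : ℝ) / (Fintype.card σ : ℝ)) ^ (t - 1) else 0) * cDist f a z
      = (if a j = x then ((1 : ℝ) / (Fintype.card σ : ℝ)) ^ (t - 1) else 0) := by
    intro a
    rw [← Finset.mul_sum, cDist_sum f a, mul_one]
  rw [Finset.sum_congr rfl fun a _ => h1 a, ← Finset.sum_filter, Finset.sum_const,
    fiber_card j x, nsmul_eq_mul, div_pow, one_pow]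
  push_cast
  field_simp

lemma neDist_formula (ht : 0 < t) (hσ : 2 ≤ Fintype.card σ) (j : Fin t) (x : σ) (z : W) :
    ((Fintype.card σ : ℝ) - 1) * neDist f j x z
      = (Fintype.card σ : ℝ) * outDist f z - eqDist f j x z := by
  have hk2 : (2 : ℝ) ≤ (Fintype.card σ : ℝ) := by exact_mod_cast hσ
  rw [neDist_eq, eqDist_eq, outDist_eq, Finset.mul_sum, Finset.mul_sum, ← Finset.sum_sub_distrib]
  refine Finset.sum_congr rfl fun a _ => ?_
  rw [← mul_assoc, ← mul_assoc, ← sub_mul, coef_eq (σ := σ) ht hσ]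
  congr 1
  split
  · ring
  · rw [← mul_assoc]
    have hk1 : (Fintype.card σ : ℝ) - 1 ≠ 0 := by linarith
    field_simp
    ring

lemma neDist_sum (ht : 0 < t) (hσ : 2 ≤ Fintype.card σ) (j : Fin t) (x : σ) :
    ∑ z, neDist f j x z = 1 := by
  have hk2 : (2 : ℝ) ≤ (Fintype.card σ : ℝ) := by exact_mod_cast hσ
  have h1 : ((Fintype.card σ : ℝ) - 1) * ∑ z, neDist f j x z
      = (Fintype.card σ : ℝ) - 1 := by
    rw [Finset.mul_sum, Finset.sum_congr rfl fun z _ => neDist_formula f ht hσ j x z,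
      Finset.sum_sub_distrib, ← Finset.mul_sum, outDist_sum f hσ, eqDist_sum f hσ j x]
    ring
  have h2 : ((Fintype.card σ : ℝ) - 1) ≠ 0 := by linarith
  have h3 : ((Fintype.card σ : ℝ) - 1) * ∑ z, neDist f j x z
      = ((Fintype.card σ : ℝ) - 1) * 1 := by rw [h1, mul_one]
  exact mul_left_cancel₀ h2 h3

lemma eqDist_le (ht : 0 < t) (hσ : 2 ≤ Fintype.card σ) (j : Fin t) (x : σ) (z : W) :
    eqDist f j x z ≤ (Fintype.card σ : ℝ) * outDist f z := by
  rw [← sum_x_eqDist f ht hσ j z]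
  exact Finset.single_le_sum (fun x' _ => eqDist_nonneg f j x' z) (mem_univ x)

lemma ne_sub_out (ht : 0 < t) (hσ : 2 ≤ Fintype.card σ) (j : Fin t) (x : σ) (z : W) :
    neDist f j x z - outDist f z
      = (1 / (Fintype.card σ : ℝ)) * (neDist f j x z - eqDist f j x z) := by
  have hk2 : (2 : ℝ) ≤ (Fintype.card σ : ℝ) := by exact_mod_cast hσ
  have h1 := neDist_formula f ht hσ j x z
  have hk0 : (Fintype.card σ : ℝ) ≠ 0 := by linarith
  have hk1 : (Fintype.card σ : ℝ) - 1 ≠ 0 := by linarith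
  field_simp
  nlinarith [h1]

lemma B_le_A (ht : 0 < t) (hσ : 2 ≤ Fintype.card σ) :
    ∑ j : Fin t, ∑ x : σ, (1 / (Fintype.card σ : ℝ)) * klN (eqDist f j x) (outDist f)
      ≤ ∑ z : W, ∑ a : Fin t → σ,
          ((1 : ℝ) / (Fintype.card σ : ℝ)) ^ t * cDist f a z
            * Real.log (cDist f a z / outDist f z) := by
  have hk0 : (0:ℝ) < (Fintype.card σ : ℝ) := by exact_mod_cast lt_of_lt_of_le two_pos hσ
  have hπ0 : (0:ℝ) < ((1:ℝ)/(Fintype.card σ : ℝ))^t := by positivity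
  have hL : ∑ j : Fin t, ∑ x : σ, (1 / (Fintype.card σ : ℝ)) * klN (eqDist f j x) (outDist f)
      = ∑ z : W, ∑ j : Fin t, ∑ x : σ, (1 / (Fintype.card σ : ℝ)) *
          (eqDist f j x z * Real.log (eqDist f j x z / outDist f z)) := by
    calc ∑ j : Fin t, ∑ x : σ, (1 / (Fintype.card σ : ℝ)) * klN (eqDist f j x) (outDist f)
        = ∑ j : Fin t, ∑ x : σ, ∑ z : W, (1 / (Fintype.card σ : ℝ)) *
            (eqDist f j x z * Real.log (eqDist f j x z / outDist f z)) :=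
          Finset.sum_congr rfl fun j _ => Finset.sum_congr rfl fun x _ => by
            rw [klN, Finset.mul_sum]
      _ = ∑ j : Fin t, ∑ z : W, ∑ x : σ, (1 / (Fintype.card σ : ℝ)) *
            (eqDist f j x z * Real.log (eqDist f j x z / outDist f z)) :=
          Finset.sum_congr rfl fun j _ => Finset.sum_comm
      _ = _ := Finset.sum_comm
  rw [hL]
  refine Finset.sum_le_sum fun z _ => ?_
  have hkey := key_superadd ht hσ
    (fun a => ((1 : ℝ) / (Fintype.card σ : ℝ)) ^ t * cDist f a z)
    (fun a => mul_nonneg hπ0.le (cDist_nonneg f a z))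
    (fun j x => eqDist f j x z)
    (fun j x => by
      show eqDist f j x z = (Fintype.card σ : ℝ) *
        ∑ a ∈ univ.filter (fun a => a j = x), ((1 : ℝ) / (Fintype.card σ : ℝ)) ^ t * cDist f a z
      rw [eqDist_eq, Finset.sum_filter, Finset.mul_sum]
      refine Finset.sum_congr rfl fun a _ => ?_
      split
      · rw [← mul_assoc, coef_eq (σ := σ) ht hσ]
      · simp)
    (outDist f z) (outDist_eq f z)
  refine le_trans hkey (le_of_eq (Finset.sum_congr rfl fun a _ => ?_))
  congr 2
  rw [mul_div_mul_left _ _ hπ0.ne']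

lemma log2_entropy {α : Type*} [Fintype α] (p : α → ℝ) :
    Real.log 2 * entropyOf p = ∑ a, -(p a * Real.log (p a)) := by
  have h2 : Real.log 2 ≠ 0 := (Real.log_pos one_lt_two).ne'
  rw [entropyOf, Finset.mul_sum]
  refine Finset.sum_congr rfl fun a _ => ?_
  rw [Real.logb]
  field_simp

lemma outDist_pos_of (f' : (Fin t → σ) → R → W) (hσ : 2 ≤ Fintype.card σ)
    {a : Fin t → σ} {z : W} (h : cDist f' a z ≠ 0) : 0 < outDist f' z := by
  have hk0 : (0:ℝ) < (Fintype.card σ : ℝ) := by exact_mod_cast lt_of_lt_of_le two_pos hσ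
  have hπ0 : (0:ℝ) < ((1:ℝ)/(Fintype.card σ : ℝ))^t := by positivity
  have h1 : ((1:ℝ)/(Fintype.card σ : ℝ))^t * cDist f' a z ≤ outDist f' z := by
    rw [outDist_eq]
    exact Finset.single_le_sum
      (fun a' _ => mul_nonneg hπ0.le (cDist_nonneg f' a' z)) (mem_univ a)
  have h2 : 0 < cDist f' a z := lt_of_le_of_ne (cDist_nonneg f' a z) (Ne.symm h)
  nlinarith

lemma A_eq_miOut (ht : 0 < t) (hσ : 2 ≤ Fintype.card σ) :
    ∑ z : W, ∑ a : Fin t → σ,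
        ((1 : ℝ) / (Fintype.card σ : ℝ)) ^ t * cDist f a z
          * Real.log (cDist f a z / outDist f z)
      = Real.log 2 * miOut f := by
  have hk0 : (0:ℝ) < (Fintype.card σ : ℝ) := by exact_mod_cast lt_of_lt_of_le two_pos hσ
  set π : ℝ := ((1:ℝ)/(Fintype.card σ : ℝ))^t with hπdef
  have hπ0 : (0:ℝ) < π := by positivity
  set g : (Fin t → σ) → W → ℝ := cDist f with hgdef
  set out : W → ℝ := outDist f with houtdef
  have hcard : ((Fintype.card (Fin t → σ)) : ℝ) * π = 1 := by
    rw [Fintype.card_fun, Fintype.card_fin, hπdef, div_pow, one_pow]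
    push_cast
    field_simp
  -- split the A-sum
  have hsplit : ∀ z a, π * g a z * Real.log (g a z / out z)
      = π * g a z * Real.log (g a z) - π * g a z * Real.log (out z) := by
    intro z a
    rcases eq_or_ne (g a z) 0 with h | h
    · rw [h]; ring
    · rw [Real.log_div h (outDist_pos_of f hσ h).ne']; ring
  have hA : ∑ z : W, ∑ a : Fin t → σ, π * g a z * Real.log (g a z / out z)
      = (∑ z : W, ∑ a : Fin t → σ, π * g a z * Real.log (g a z))
        - ∑ z : W, out z * Real.log (out z) := by
    rw [← Finset.sum_sub_distrib]
    refine Finset.sum_congr rfl fun z _ => ?_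
    rw [Finset.sum_congr rfl fun a _ => hsplit z a, Finset.sum_sub_distrib]
    congr 1
    rw [← Finset.sum_mul, ← outDist_eq]
  -- entropy of the uniform input
  have hEunif : Real.log 2 * entropyOf (fun _ : Fin t → σ => π) = -Real.log π := by
    rw [log2_entropy, Finset.sum_const, Finset.card_univ, nsmul_eq_mul]
    have : ((Fintype.card (Fin t → σ)) : ℝ) * -(π * Real.log π) = -(((Fintype.card (Fin t → σ)) : ℝ) * π * Real.log π) := by ring
    rw [this, hcard, one_mul]
  -- entropy of the joint distribution
  have hjsplit : ∀ z a, -(π * g a z * Real.log (π * g a z))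
      = -(π * g a z * Real.log π) - π * g a z * Real.log (g a z) := by
    intro z a
    rcases eq_or_ne (g a z) 0 with h | h
    · rw [h]; ring
    · rw [Real.log_mul hπ0.ne' h]; ring
  have hgsum : ∀ a, ∑ z, g a z = 1 := cDist_sum f
  have hEjoint : Real.log 2 * entropyOf (jointDist f)
      = -Real.log π - ∑ z : W, ∑ a : Fin t → σ, π * g a z * Real.log (g a z) := by
    rw [log2_entropy, Fintype.sum_prod_type]
    have h1 : ∀ (z : W) (a : Fin t → σ), -(jointDist f (z, a) * Real.log (jointDist f (z, a)))
        = -(π * g a z * Real.log π) - π * g a z * Real.log (g a z) := by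
      intro z a
      rw [jointDist_eq, ← hjsplit z a, ← hπdef, ← hgdef]
    rw [Finset.sum_congr rfl fun z _ => Finset.sum_congr rfl fun a _ => h1 z a]
    rw [Finset.sum_congr rfl fun z _ => Finset.sum_sub_distrib _ _, Finset.sum_sub_distrib]
    congr 1
    have h2 : ∀ z : W, ∑ a : Fin t → σ, -(π * g a z * Real.log π)
        = -(Real.log π) * ∑ a : Fin t → σ, π * g a z := by
      intro z
      rw [Finset.mul_sum]
      exact Finset.sum_congr rfl fun a _ => by ring
    rw [Finset.sum_congr rfl fun z _ => h2 z, ← Finset.mul_sum, Finset.sum_comm]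
    have h3 : ∑ a : Fin t → σ, ∑ z : W, π * g a z = 1 := by
      rw [Finset.sum_congr rfl fun a (_ : a ∈ univ) => (by rw [← Finset.mul_sum, hgsum a, mul_one] :
        ∑ z : W, π * g a z = π), Finset.sum_const, Finset.card_univ, nsmul_eq_mul, hcard]
    rw [h3, mul_one]
  -- entropy of the output distribution
  have hEout : Real.log 2 * entropyOf (outDist f)
      = -∑ z : W, out z * Real.log (out z) := by
    rw [log2_entropy, ← Finset.sum_neg_distrib, houtdef]
  -- combine
  rw [miOut]
  rw [mul_sub, mul_add, hEunif, hEjoint, hEout, hA]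
  ring

end



/-- For independent uniform `X₁,…,X_t` on `σ` and a randomized
mapping `f` with `I(f(X):X) ≤ C·t·log t`, the average over uniform `j ∈ [t]` and
uniform `x ∈ σ` of `d(f(X|_{X_j≠x}), f(X|_{X_j=x}))` is at most
`1 − e^{−1−C log t} + 1/|σ|`. -/
theorem avg_statDist_ne_eq_le {σ W R : Type*} [Fintype σ] [Fintype W] [Fintype R]
    [DecidableEq σ] [DecidableEq W] [Nonempty R]
    (t : ℕ) (ht : 0 < t) (hσ : 2 ≤ Fintype.card σ) (C : ℝ) (hC : 0 < C)
    (f : (Fin t → σ) → R → W)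
    (hI : miOut f ≤ C * t * Real.logb 2 t) :
    (1 / t : ℝ) * ∑ j : Fin t,
        (1 / (Fintype.card σ : ℝ)) * ∑ x : σ, statDist (neDist f j x) (eqDist f j x)
      ≤ 1 - Real.exp (-1 - C * Real.logb 2 t) + 1 / (Fintype.card σ : ℝ) := by
  classical
  have hk2 : (2:ℝ) ≤ (Fintype.card σ : ℝ) := by exact_mod_cast hσ
  have hk0 : (0:ℝ) < (Fintype.card σ : ℝ) := by linarith
  have ht0 : (0:ℝ) < (t:ℝ) := by exact_mod_cast ht
  have ht1 : (1:ℝ) ≤ (t:ℝ) := by exact_mod_cast ht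
  set K : ℝ := (Fintype.card σ : ℝ) with hK
  set D : Fin t → σ → ℝ := fun j x => klN (eqDist f j x) (outDist f) with hD
  set E : Fin t → σ → ℝ := fun j x => Real.exp (-1 - D j x) with hE
  -- step 1: pointwise bound on each statDist
  have hstep1 : ∀ (j : Fin t) (x : σ),
      statDist (neDist f j x) (eqDist f j x) ≤ 1 / K + (1 - E j x) := by
    intro j x
    have hsupp : ∀ z, outDist f z = 0 → eqDist f j x z = 0 := by
      intro z h0
      have h1 := eqDist_le f ht hσ j x z
      have h2 := eqDist_nonneg f j x z
      rw [h0, mul_zero] at h1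
      linarith
    have hvajda := statDist_le_one_sub_exp (eqDist f j x) (outDist f)
      (eqDist_nonneg f j x) (outDist_nonneg f) (eqDist_sum f hσ j x) (outDist_sum f hσ) hsupp
    -- triangle inequality
    have htri : statDist (neDist f j x) (eqDist f j x)
        ≤ statDist (neDist f j x) (outDist f) + statDist (eqDist f j x) (outDist f) := by
      rw [statDist, statDist, statDist, ← mul_add, ← Finset.sum_add_distrib]
      refine mul_le_mul_of_nonneg_left (Finset.sum_le_sum fun z _ => ?_) (by norm_num)
      have h3 : neDist f j x z - eqDist f j x z
          = (neDist f j x z - outDist f z) + (outDist f z - eqDist f j x z) := by ring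
      rw [h3]
      refine le_trans (abs_add_le _ _) ?_
      rw [abs_sub_comm (outDist f z) (eqDist f j x z)]
    have hneout : statDist (neDist f j x) (outDist f) ≤ 1 / K := by
      rw [statDist]
      have h4 : ∀ z, |neDist f j x z - outDist f z|
          ≤ (1 / K) * (neDist f j x z + eqDist f j x z) := by
        intro z
        rw [ne_sub_out f ht hσ j x z, abs_mul, abs_of_nonneg (by positivity : (0:ℝ) ≤ 1 / K)]
        refine mul_le_mul_of_nonneg_left ?_ (by positivity)
        refine le_trans (abs_sub _ _) ?_
        rw [abs_of_nonneg (neDist_nonneg f hσ j x z), abs_of_nonneg (eqDist_nonneg f j x z)]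
      calc (1/2 : ℝ) * ∑ z, |neDist f j x z - outDist f z|
          ≤ (1/2 : ℝ) * ∑ z, (1 / K) * (neDist f j x z + eqDist f j x z) :=
            mul_le_mul_of_nonneg_left (Finset.sum_le_sum fun z _ => h4 z) (by norm_num)
        _ = 1 / K := by
            rw [← Finset.mul_sum, Finset.sum_add_distrib, neDist_sum f ht hσ j x,
              eqDist_sum f hσ j x]
            ring
    calc statDist (neDist f j x) (eqDist f j x)
        ≤ statDist (neDist f j x) (outDist f) + statDist (eqDist f j x) (outDist f) := htri
      _ ≤ 1 / K + (1 - E j x) := add_le_add hneout hvajda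
  -- step 2: Jensen for the average of E
  have havg : Real.exp (-1 - (1 / ((t:ℝ) * K)) * ∑ j : Fin t, ∑ x : σ, D j x)
      ≤ (1 / ((t:ℝ) * K)) * ∑ j : Fin t, ∑ x : σ, E j x := by
    have hw : ∀ p : Fin t × σ, (0:ℝ) ≤ 1 / ((t:ℝ) * K) := fun _ => by positivity
    have hcard : ∑ _p : Fin t × σ, (1 / ((t:ℝ) * K)) = 1 := by
      rw [Finset.sum_const, Finset.card_univ, Fintype.card_prod, Fintype.card_fin,
        nsmul_eq_mul]
      push_cast
      field_simp
      exact hK.symm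
    have hJ := exp_jensen (univ : Finset (Fin t × σ)) (fun _ => 1 / ((t:ℝ) * K))
      (fun p => Real.exp (-1 - D p.1 p.2)) (fun p _ => hw p) hcard
      (fun p _ => Real.exp_pos _)
    simp only [Real.log_exp] at hJ
    have h5 : ∑ p : Fin t × σ, (1 / ((t:ℝ) * K)) * (-1 - D p.1 p.2)
        = -1 - (1 / ((t:ℝ) * K)) * ∑ j : Fin t, ∑ x : σ, D j x := by
      have h6 : ∀ p : Fin t × σ, (1 / ((t:ℝ) * K)) * (-1 - D p.1 p.2)
          = -(1 / ((t:ℝ) * K)) + -((1 / ((t:ℝ) * K)) * D p.1 p.2) := fun p => by ring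
      rw [Finset.sum_congr rfl fun p _ => h6 p, Finset.sum_add_distrib, Finset.sum_const,
        Finset.card_univ, Fintype.card_prod, Fintype.card_fin, nsmul_eq_mul,
        Finset.sum_neg_distrib, ← Finset.mul_sum, Fintype.sum_prod_type]
      have hN : ((t * Fintype.card σ : ℕ) : ℝ) = (t:ℝ) * K := by
        push_cast
        rw [hK]
      rw [hN]
      have h7 : ((t:ℝ) * K) * -(1 / ((t:ℝ) * K)) = -1 := by
        field_simp
      rw [h7]
      ring
    rw [h5] at hJ
    calc Real.exp (-1 - (1 / ((t:ℝ) * K)) * ∑ j : Fin t, ∑ x : σ, D j x)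
        ≤ ∑ p : Fin t × σ, (1 / ((t:ℝ) * K)) * Real.exp (-1 - D p.1 p.2) := hJ
      _ = (1 / ((t:ℝ) * K)) * ∑ j : Fin t, ∑ x : σ, E j x := by
          rw [← Finset.mul_sum]
          congr 1
          rw [Fintype.sum_prod_type]
  -- step 3: bound the average KL divergence
  have hlog2 : (0:ℝ) < Real.log 2 := Real.log_pos one_lt_two
  have hlogt : Real.log t ≤ Real.logb 2 t := by
    rw [Real.logb, le_div_iff₀ hlog2]
    have h21 : Real.log 2 ≤ 1 := by
      have := Real.log_le_sub_one_of_pos (by norm_num : (0:ℝ) < 2)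
      linarith
    nlinarith [Real.log_nonneg ht1]
  have hA_le : ∑ z : W, ∑ a : Fin t → σ,
      ((1 : ℝ) / K) ^ t * cDist f a z * Real.log (cDist f a z / outDist f z)
      ≤ C * t * Real.log t := by
    rw [A_eq_miOut f ht hσ]
    calc Real.log 2 * miOut f ≤ Real.log 2 * (C * t * Real.logb 2 t) :=
          mul_le_mul_of_nonneg_left hI hlog2.le
      _ = C * t * Real.log t := by
          rw [Real.logb]
          field_simp
  have hBsum : ∑ j : Fin t, ∑ x : σ, (1 / K) * D j x ≤ C * t * Real.log t :=
    le_trans (B_le_A f ht hσ) hA_le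
  have havgD : (1 / ((t:ℝ) * K)) * ∑ j : Fin t, ∑ x : σ, D j x ≤ C * Real.logb 2 t := by
    have h11 : ∑ j : Fin t, ∑ x : σ, (1 / K) * D j x
        = (1 / K) * ∑ j : Fin t, ∑ x : σ, D j x := by
      rw [Finset.mul_sum]
      exact Finset.sum_congr rfl fun j _ => by rw [Finset.mul_sum]
    rw [h11] at hBsum
    have h12 : (1 / ((t:ℝ) * K)) * ∑ j : Fin t, ∑ x : σ, D j x
        = (1 / (t:ℝ)) * ((1 / K) * ∑ j : Fin t, ∑ x : σ, D j x) := by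
      field_simp
    rw [h12]
    have h13 : (1 / (t:ℝ)) * ((1 / K) * ∑ j : Fin t, ∑ x : σ, D j x)
        ≤ (1 / (t:ℝ)) * (C * t * Real.log t) :=
      mul_le_mul_of_nonneg_left hBsum (by positivity)
    have h14 : (1 / (t:ℝ)) * (C * t * Real.log t) = C * Real.log t := by
      field_simp
    have h15 : C * Real.log t ≤ C * Real.logb 2 t :=
      mul_le_mul_of_nonneg_left hlogt hC.le
    linarith
  -- final assembly
  calc (1 / t : ℝ) * ∑ j : Fin t,
        (1 / K) * ∑ x : σ, statDist (neDist f j x) (eqDist f j x)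
      ≤ (1 / t : ℝ) * ∑ j : Fin t, (1 / K) * ∑ x : σ, (1 / K + (1 - E j x)) := by
        refine mul_le_mul_of_nonneg_left (Finset.sum_le_sum fun j _ => ?_) (by positivity)
        exact mul_le_mul_of_nonneg_left (Finset.sum_le_sum fun x _ => hstep1 j x) (by positivity)
    _ = 1 / K + 1 - (1 / ((t:ℝ) * K)) * ∑ j : Fin t, ∑ x : σ, E j x := by
        have h9 : ∀ j : Fin t, (1 / K) * ∑ x : σ, (1 / K + (1 - E j x))
            = (1 / K + 1) - (1 / K) * ∑ x : σ, E j x := by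
          intro j
          rw [Finset.sum_congr rfl fun x _ =>
            (by ring : (1 / K + (1 - E j x)) = (1 / K + 1) - E j x)]
          rw [Finset.sum_sub_distrib, Finset.sum_const, Finset.card_univ, nsmul_eq_mul, mul_sub,
            ← mul_assoc]
          congr 2
          · rw [hK]
            field_simp
        rw [Finset.sum_congr rfl fun j _ => h9 j, Finset.sum_sub_distrib, Finset.sum_const,
          Finset.card_univ, Fintype.card_fin, nsmul_eq_mul, mul_sub, ← Finset.mul_sum]
        have h16 : (1 / (t:ℝ)) * ((t:ℝ) * (1 / K + 1)) = 1 / K + 1 := by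
          field_simp
        have h17 : (1 / (t:ℝ)) * ((1 / K) * ∑ j : Fin t, ∑ x : σ, E j x)
            = (1 / ((t:ℝ) * K)) * ∑ j : Fin t, ∑ x : σ, E j x := by
          rw [← mul_assoc, div_mul_div_comm, one_mul]
        rw [h16, h17]
    _ ≤ 1 / K + 1 - Real.exp (-1 - (1 / ((t:ℝ) * K)) * ∑ j : Fin t, ∑ x : σ, D j x) := by
        linarith [havg]
    _ ≤ 1 / K + 1 - Real.exp (-1 - C * Real.logb 2 t) := by
        have h18 : -1 - C * Real.logb 2 t
            ≤ -1 - (1 / ((t:ℝ) * K)) * ∑ j : Fin t, ∑ x : σ, D j x := by linarith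
        linarith [Real.exp_le_exp.mpr h18]
    _ = 1 - Real.exp (-1 - C * Real.logb 2 t) + 1 / K := by ring
end
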